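/- arXiv:2409.20495 — 5 statements merged into one kernel-verified Lean document; each statement's English description precedes it below -/
import Mathlib

section
/- Let G be a nontrivial finite abelian group, n ≥ 1, let (σ,ρ) be a double partition of n, let H be the stabiliser in W = G ≀ S_n of some fixed (σ,ρ)-tabloid, and let Y be a nonempty subset of W that is a (σ,ρ)-clique, i.e., for all distinct x, y ∈ Y the element x⁻¹y stabilises no (σ,ρ)-tabloid. Then |Y|·|H| ≤ |W|, and equality holds if and only if Y is (σ,ρ)-transitive; moreover, in case of equality Y is sharply (σ,ρ)-transitive (the transitivity constant is 1). -/
/-- The monoid hom `Perm (Fin n) →* MulAut (Fin n → G)`, permuting coordinates. -/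
def permMulAut (G : Type*) [CommGroup G] (n : ℕ) :
    Equiv.Perm (Fin n) →* MulAut (Fin n → G) where
  toFun π := MulEquiv.arrowCongr π (MulEquiv.refl G)
  map_one' := by ext f a; rfl
  map_mul' := by intro π σ; ext f a; rfl

/-- The wreath product `G ≀ Sₙ`. -/
abbrev Wr (G : Type*) [CommGroup G] (n : ℕ) :=
  SemidirectProduct (Fin n → G) (Equiv.Perm (Fin n)) (permMulAut G n)

/-- The natural action of `G ≀ Sₙ` on `G × [n]`. -/
def wAct {G : Type*} [CommGroup G] {n : ℕ} (w : Wr G n) (p : G × Fin n) : G × Fin n :=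
  (p.1 * w.left (w.right p.2), w.right p.2)

/-- The `i`-th largest part of a multiset of naturals (0-indexed; `0` beyond the last part). -/
def dparts (s : Multiset ℕ) (i : ℕ) : ℕ := ((s.sort (· ≤ ·)).reverse).getD i 0

/-- `s` is dominated by `t`. -/
def msDom (s t : Multiset ℕ) : Prop :=
  ∀ k, (((s.sort (· ≤ ·)).reverse).take k).sum ≤ (((t.sort (· ≤ ·)).reverse).take k).sum

/-- `T` is a `(σ,ρ)`-tabloid: the first component assigns to each element of `[n]` a block
(`Sum.inl i` is the block of the `i+1`-st largest part of `σ`, `Sum.inr j` that of `ρ`),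
blocks have the prescribed sizes, and the colouring (second component)
is normalised to `1` on the `ρ`-blocks. -/
def IsTabloid (G : Type*) [CommGroup G] (n : ℕ) (σ ρ : Multiset ℕ)
    (T : (Fin n → ℕ ⊕ ℕ) × (Fin n → G)) : Prop :=
  (∀ i, Nat.card {a : Fin n // T.1 a = Sum.inl i} = dparts σ i) ∧
  (∀ j, Nat.card {a : Fin n // T.1 a = Sum.inr j} = dparts ρ j) ∧
  (∀ a j, T.1 a = Sum.inr j → T.2 a = 1)

/-- The action of the wreath product on (raw) tabloids. -/
def tabAct {G : Type*} [CommGroup G] {n : ℕ} (w : Wr G n)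
    (T : (Fin n → ℕ ⊕ ℕ) × (Fin n → G)) : (Fin n → ℕ ⊕ ℕ) × (Fin n → G) :=
  ⟨fun a => T.1 (w.right⁻¹ a),
   fun a => match T.1 (w.right⁻¹ a) with
     | Sum.inl _ => T.2 (w.right⁻¹ a) * w.left a
     | Sum.inr _ => 1⟩

/-- A subset `Y` of `W` is transitive on `S ⊆ Ω` (w.r.t. an action `act`): there is a
constant `c > 0` such that any `a ∈ S` is mapped to any `b ∈ S` by exactly `c` elements of `Y`. -/
def IsTransitiveOn {W Ω : Type*} (act : W → Ω → Ω) (S : Set Ω) (Y : Set W) : Prop :=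
  ∃ c : ℕ, 0 < c ∧ ∀ a ∈ S, ∀ b ∈ S, Nat.card {y : W // y ∈ Y ∧ act y a = b} = c

/-- `Y ⊆ G ≀ Sₙ` is `(σ,ρ)`-transitive. -/
def DPTransitive (G : Type*) [CommGroup G] (n : ℕ) (σ ρ : Multiset ℕ)
    (Y : Set (Wr G n)) : Prop :=
  IsTransitiveOn tabAct {T | IsTabloid G n σ ρ T} Y

/-- `(σ,ρ) ≽_G (τ,π)` : every `(σ,ρ)`-transitive subset of `G ≀ Sₙ` is `(τ,π)`-transitive. -/
def DPDom (G : Type*) [CommGroup G] (n : ℕ) (σ ρ τ π : Multiset ℕ) : Prop :=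
  ∀ Y : Set (Wr G n), DPTransitive G n σ ρ Y → DPTransitive G n τ π Y

/-- The partition obtained by adding `k` to the `r`-th largest part (1-indexed). -/
def addPart (s : Multiset ℕ) (r k : ℕ) : Multiset ℕ :=
  s.erase (dparts s (r - 1)) + {dparts s (r - 1) + k}

namespace CBAux

variable {G : Type*} [CommGroup G] {n : ℕ}

def Nrm (T : (Fin n → ℕ ⊕ ℕ) × (Fin n → G)) : Prop :=
  ∀ a j, T.1 a = Sum.inr j → T.2 a = 1

lemma act_mul (w w' : Wr G n) (T : (Fin n → ℕ ⊕ ℕ) × (Fin n → G)) :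
    tabAct (w * w') T = tabAct w (tabAct w' T) := by
  have hr : ∀ a : Fin n, (w * w').right⁻¹ a = w'.right⁻¹ (w.right⁻¹ a) := by
    intro a
    simp [SemidirectProduct.mul_right, mul_inv_rev, Equiv.Perm.mul_apply]
  have hl : ∀ a : Fin n, (w * w').left a = w.left a * w'.left (w.right⁻¹ a) := by
    intro a
    simp [SemidirectProduct.mul_left, permMulAut, Pi.mul_apply]
  refine Prod.ext (funext fun a => ?_) (funext fun a => ?_)
  · show T.1 ((w * w').right⁻¹ a) = (tabAct w' T).1 (w.right⁻¹ a)
    rw [hr]; rfl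
  · show (tabAct (w * w') T).2 a = (tabAct w (tabAct w' T)).2 a
    simp only [tabAct, hr, hl]
    rcases h : T.1 (w'.right⁻¹ (w.right⁻¹ a)) with i | j
    · simp [h, mul_comm, mul_assoc, mul_left_comm]
    · simp [h]

lemma act_one (T : (Fin n → ℕ ⊕ ℕ) × (Fin n → G)) (hT : Nrm T) :
    tabAct (1 : Wr G n) T = T := by
  refine Prod.ext (funext fun a => ?_) (funext fun a => ?_)
  · rfl
  · show (tabAct (1 : Wr G n) T).2 a = T.2 a
    simp only [tabAct]
    have h1 : ((1 : Wr G n).right)⁻¹ a = a := rfl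
    rcases h : T.1 a with i | j
    · simp [h1, h]
    · simp [h1, h]
      exact (hT a j h).symm

lemma nrm_act (w : Wr G n) (T : (Fin n → ℕ ⊕ ℕ) × (Fin n → G)) : Nrm (tabAct w T) := by
  intro a j h
  have h' : T.1 (w.right⁻¹ a) = Sum.inr j := h
  show (tabAct w T).2 a = 1
  simp only [tabAct, h']

lemma act_inv_act (w : Wr G n) (T : (Fin n → ℕ ⊕ ℕ) × (Fin n → G)) (hT : Nrm T) :
    tabAct w⁻¹ (tabAct w T) = T := by
  rw [← act_mul, inv_mul_cancel, act_one _ hT]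

lemma isTabloid_act {σ ρ : Multiset ℕ} (w : Wr G n) {T : (Fin n → ℕ ⊕ ℕ) × (Fin n → G)}
    (hT : IsTabloid G n σ ρ T) : IsTabloid G n σ ρ (tabAct w T) := by
  obtain ⟨h1, h2, _⟩ := hT
  refine ⟨fun i => ?_, fun j => ?_, nrm_act w T⟩
  · exact (Nat.card_congr (Equiv.subtypeEquiv (w.right⁻¹ : Equiv.Perm (Fin n))
      (fun a => Iff.rfl))).trans (h1 i)
  · exact (Nat.card_congr (Equiv.subtypeEquiv (w.right⁻¹ : Equiv.Perm (Fin n))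
      (fun a => Iff.rfl))).trans (h2 j)

lemma exists_act {σ ρ : Multiset ℕ} {T T' : (Fin n → ℕ ⊕ ℕ) × (Fin n → G)}
    (hT : IsTabloid G n σ ρ T) (hT' : IsTabloid G n σ ρ T') :
    ∃ w : Wr G n, tabAct w T = T' := by
  classical
  have hcard : ∀ v : ℕ ⊕ ℕ,
      Fintype.card {a : Fin n // T.1 a = v} = Fintype.card {a : Fin n // T'.1 a = v} := by
    intro v
    rw [← Nat.card_eq_fintype_card, ← Nat.card_eq_fintype_card]
    rcases v with i | j
    · rw [hT.1 i, hT'.1 i]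
    · rw [hT.2.1 j, hT'.2.1 j]
  let e : ∀ v, {a : Fin n // T.1 a = v} ≃ {a : Fin n // T'.1 a = v} :=
    fun v => Fintype.equivOfCardEq (hcard v)
  let π : Equiv.Perm (Fin n) :=
    ((Equiv.sigmaFiberEquiv T.1).symm.trans
      (Equiv.sigmaCongrRight e)).trans (Equiv.sigmaFiberEquiv T'.1)
  have hπ : ∀ a, T'.1 (π a) = T.1 a := fun a => (e (T.1 a) ⟨a, rfl⟩).2
  have hπ' : ∀ a, T.1 (π⁻¹ a) = T'.1 a := by
    intro a
    have := hπ (π⁻¹ a)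
    rw [Equiv.Perm.inv_def, Equiv.apply_symm_apply] at this; exact this.symm
  refine ⟨⟨fun a => (T.2 (π⁻¹ a))⁻¹ * T'.2 a, π⟩, ?_⟩
  refine Prod.ext (funext fun a => ?_) (funext fun a => ?_)
  · exact hπ' a
  · show (match T.1 (π⁻¹ a) with
      | Sum.inl _ => T.2 (π⁻¹ a) * ((T.2 (π⁻¹ a))⁻¹ * T'.2 a)
      | Sum.inr _ => 1) = T'.2 a
    rcases h : T.1 (π⁻¹ a) with i | j
    · simp
    · have : T'.1 a = Sum.inr j := by rw [← hπ' a, h]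
      rw [hT'.2.2 a j this]

lemma card_fiber {T₀ T : (Fin n → ℕ ⊕ ℕ) × (Fin n → G)} (h0 : Nrm T₀)
    (w_T : Wr G n) (hw : tabAct w_T T₀ = T) :
    Nat.card {w : Wr G n // tabAct w T₀ = T} = Nat.card {w : Wr G n // tabAct w T₀ = T₀} := by
  refine Nat.card_congr ⟨fun x => ⟨w_T⁻¹ * x.1, ?_⟩, fun x => ⟨w_T * x.1, ?_⟩, ?_, ?_⟩
  · rw [act_mul, x.2, ← hw, act_inv_act _ _ h0]
  · rw [act_mul, x.2, hw]
  · intro x; apply Subtype.ext; simp [mul_inv_cancel_left]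
  · intro x; apply Subtype.ext; simp [inv_mul_cancel_left]

lemma card_of_fibers {α β : Type*} [Finite α] [Finite β] (f : α → β) (c : ℕ)
    (h : ∀ b, Nat.card {a // f a = b} = c) : Nat.card α = Nat.card β * c := by
  classical
  have := Fintype.ofFinite α
  have := Fintype.ofFinite β
  rw [Nat.card_congr (Equiv.sigmaFiberEquiv f).symm, Nat.card_eq_fintype_card,
    Fintype.card_sigma]
  have h' : ∀ b : β, Fintype.card {a // f a = b} = c := by
    intro b; rw [← Nat.card_eq_fintype_card]; exact h b
  simp only [h', Finset.sum_const, Finset.card_univ, smul_eq_mul, Nat.card_eq_fintype_card]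

lemma finite_wr [Finite G] : Finite (Wr G n) :=
  Finite.of_injective (fun w : Wr G n => (w.left, w.right))
    (by intro w w' h
        rw [Prod.mk.injEq] at h
        exact SemidirectProduct.ext h.1 h.2)

end CBAux

/-- **Clique bound (Theorem on `(σ,ρ)`-cliques).**
Let `G` be a nontrivial finite abelian group, `(σ,ρ)` a double partition of `n ≥ 1`,
`H` the stabiliser in `W = G ≀ Sₙ` of a fixed `(σ,ρ)`-tabloid `T₀`, and `Y` a nonempty
`(σ,ρ)`-clique in `W` (no quotient `x⁻¹y` of distinct elements of `Y` stabilises any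
`(σ,ρ)`-tabloid).  Then `|Y|·|H| ≤ |W|`; equality holds iff `Y` is `(σ,ρ)`-transitive;
and in case of equality `Y` is sharply `(σ,ρ)`-transitive. -/


theorem clique_bound (G : Type) [CommGroup G] [Fintype G] [Nontrivial G]
    (n : ℕ) (hn : 1 ≤ n) (σ ρ : Multiset ℕ) (hσ0 : 0 ∉ σ) (hρ0 : 0 ∉ ρ)
    (hsum : σ.sum + ρ.sum = n)
    (T₀ : (Fin n → ℕ ⊕ ℕ) × (Fin n → G)) (hT₀ : IsTabloid G n σ ρ T₀)
    (Y : Set (Wr G n)) (hY : Y.Nonempty)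
    (hclique : ∀ x ∈ Y, ∀ y ∈ Y, x ≠ y →
      ∀ T, IsTabloid G n σ ρ T → tabAct (x⁻¹ * y) T ≠ T) :
    Nat.card Y * Nat.card {w : Wr G n | tabAct w T₀ = T₀} ≤ Nat.card (Wr G n) ∧
    (Nat.card Y * Nat.card {w : Wr G n | tabAct w T₀ = T₀} = Nat.card (Wr G n) ↔
      DPTransitive G n σ ρ Y) ∧
    (Nat.card Y * Nat.card {w : Wr G n | tabAct w T₀ = T₀} = Nat.card (Wr G n) →
      ∀ a, IsTabloid G n σ ρ a → ∀ b, IsTabloid G n σ ρ b →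
        Nat.card {y : Wr G n // y ∈ Y ∧ tabAct y a = b} = 1) := by
  classical
  haveI : Finite (Wr G n) := CBAux.finite_wr
  open CBAux in
  -- the stabiliser of T₀, as a subtype
  set H : Set (Wr G n) := {w : Wr G n | tabAct w T₀ = T₀} with hH
  have hN₀ : Nrm T₀ := hT₀.2.2
  -- stabiliser elements have stabilising inverses
  have hstab_inv : ∀ h : Wr G n, tabAct h T₀ = T₀ → tabAct h⁻¹ T₀ = T₀ := by
    intro h hh
    have := CBAux.act_inv_act h T₀ hN₀
    rwa [hh] at this
  -- uniqueness from the clique property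
  have huniq : ∀ a, IsTabloid G n σ ρ a → ∀ y ∈ Y, ∀ y' ∈ Y,
      tabAct y a = tabAct y' a → y = y' := by
    intro a ha y hy y' hy' he
    by_contra hne
    refine hclique y' hy' y hy (fun h => hne h.symm) a ha ?_
    rw [CBAux.act_mul, he, ← CBAux.act_mul, inv_mul_cancel, CBAux.act_one _ ha.2.2]
  -- the injection Ψ : Y × H → W depending on a tabloid a
  have key_inj : ∀ a, IsTabloid G n σ ρ a → ∀ w_a : Wr G n, tabAct w_a T₀ = a →
      Function.Injective (fun p : ↥Y × ↥H => p.1.1 * (w_a * p.2.1 * w_a⁻¹)) := by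
    intro a ha w_a hwa
    have hwainv : tabAct w_a⁻¹ a = T₀ := by
      have := CBAux.act_inv_act w_a T₀ hN₀
      rwa [hwa] at this
    have hfix : ∀ h : Wr G n, tabAct h T₀ = T₀ → tabAct (w_a * h * w_a⁻¹) a = a := by
      intro h hh
      rw [CBAux.act_mul, CBAux.act_mul, hwainv, hh, hwa]
    rintro ⟨⟨y, hy⟩, ⟨h, hh⟩⟩ ⟨⟨y', hy'⟩, ⟨h', hh'⟩⟩ heq
    simp only at heq
    have hh0 : tabAct h T₀ = T₀ := hh
    have hh0' : tabAct h' T₀ = T₀ := hh'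
    have hact : tabAct y a = tabAct y' a := by
      calc tabAct y a = tabAct (y * (w_a * h * w_a⁻¹)) a := by
            rw [CBAux.act_mul, hfix h hh0]
        _ = tabAct (y' * (w_a * h' * w_a⁻¹)) a := by rw [heq]
        _ = tabAct y' a := by rw [CBAux.act_mul, hfix h' hh0']
    have hyy : y = y' := huniq a ha y hy y' hy' hact
    subst hyy
    have hhh : h = h' := by
      have h1 : y * (w_a * h * w_a⁻¹) = y * (w_a * h' * w_a⁻¹) := heq
      have h2 : w_a * h * w_a⁻¹ = w_a * h' * w_a⁻¹ := mul_left_cancel h1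
      have h3 : w_a * h = w_a * h' := mul_right_cancel h2
      exact mul_left_cancel h3
    subst hhh
    rfl
  -- Part 1 : the bound
  have hone : tabAct (1 : Wr G n) T₀ = T₀ := CBAux.act_one _ hN₀
  have hle : Nat.card Y * Nat.card H ≤ Nat.card (Wr G n) := by
    have hinj := key_inj T₀ hT₀ 1 hone
    have := Nat.card_le_card_of_injective _ hinj
    rwa [Nat.card_prod] at this
  -- the set of tabloids is finite
  have hSfin : {T | IsTabloid G n σ ρ T}.Finite := by
    refine Set.Finite.subset (Set.finite_univ.image (fun w : Wr G n => tabAct w T₀)) ?_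
    intro T hT
    obtain ⟨w, hw⟩ := CBAux.exists_act hT₀ hT
    exact ⟨w, trivial, hw⟩
  haveI : Finite ↥{T | IsTabloid G n σ ρ T} := hSfin.to_subtype
  -- Part 3 : sharp transitivity in case of equality
  have hsharp : Nat.card Y * Nat.card H = Nat.card (Wr G n) →
      ∀ a, IsTabloid G n σ ρ a → ∀ b, IsTabloid G n σ ρ b →
        Nat.card {y : Wr G n // y ∈ Y ∧ tabAct y a = b} = 1 := by
    intro heq a ha b hb
    obtain ⟨w_a, hwa⟩ := CBAux.exists_act hT₀ ha
    obtain ⟨w_b, hwb⟩ := CBAux.exists_act hT₀ hb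
    have hinj := key_inj a ha w_a hwa
    have hbij : Function.Bijective (fun p : ↥Y × ↥H => p.1.1 * (w_a * p.2.1 * w_a⁻¹)) := by
      refine (Nat.bijective_iff_injective_and_card _).mpr ⟨hinj, ?_⟩
      rw [Nat.card_prod]; exact heq
    obtain ⟨⟨⟨y, hy⟩, ⟨h, hh⟩⟩, hyh⟩ := hbij.2 (w_b * w_a⁻¹)
    simp only at hyh
    have hh0 : tabAct h T₀ = T₀ := hh
    have hkey : y * w_a * h = w_b := by
      have := congrArg (fun z => z * w_a) hyh
      simpa [mul_assoc] using this
    have hex : tabAct y a = b := by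
      have h1 : y * w_a = w_b * h⁻¹ := by
        rw [← hkey, mul_assoc, mul_inv_cancel, mul_one]
      calc tabAct y a = tabAct y (tabAct w_a T₀) := by rw [hwa]
        _ = tabAct (y * w_a) T₀ := (CBAux.act_mul _ _ _).symm
        _ = tabAct (w_b * h⁻¹) T₀ := by rw [h1]
        _ = tabAct w_b (tabAct h⁻¹ T₀) := CBAux.act_mul _ _ _
        _ = b := by rw [hstab_inv h hh0, hwb]
    rw [Nat.card_eq_one_iff_unique]
    constructor
    · constructor
      intro ⟨y₁, hy₁, he₁⟩ ⟨y₂, hy₂, he₂⟩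
      exact Subtype.ext (huniq a ha y₁ hy₁ y₂ hy₂ (he₁.trans he₂.symm))
    · exact ⟨⟨y, hy, hex⟩⟩
  refine ⟨hle, ⟨?_, ?_⟩, hsharp⟩
  · -- equality → transitive
    intro heq
    exact ⟨1, one_pos, fun a ha b hb => hsharp heq a ha b hb⟩
  · -- transitive → equality
    rintro ⟨c, hc, htr⟩
    have hcardW : Nat.card (Wr G n) = Nat.card ↥{T | IsTabloid G n σ ρ T} * Nat.card H := by
      refine CBAux.card_of_fibers
        (fun w : Wr G n => (⟨tabAct w T₀, CBAux.isTabloid_act w hT₀⟩ :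
          ↥{T | IsTabloid G n σ ρ T})) _ ?_
      intro b
      obtain ⟨w_b, hwb⟩ := CBAux.exists_act hT₀ b.2
      have e : {w : Wr G n // (⟨tabAct w T₀, CBAux.isTabloid_act w hT₀⟩ :
          ↥{T | IsTabloid G n σ ρ T}) = b} ≃ {w : Wr G n // tabAct w T₀ = b.1} :=
        Equiv.subtypeEquivRight (fun w => by
          constructor
          · intro hw; exact congrArg Subtype.val hw
          · intro hw; exact Subtype.ext hw)
      rw [Nat.card_congr e]
      exact CBAux.card_fiber hN₀ w_b hwb
    have hcardY : Nat.card Y = Nat.card ↥{T | IsTabloid G n σ ρ T} * c := by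
      refine CBAux.card_of_fibers
        (fun y : ↥Y => (⟨tabAct y.1 T₀, CBAux.isTabloid_act _ hT₀⟩ :
          ↥{T | IsTabloid G n σ ρ T})) _ ?_
      intro b
      have e : {y : ↥Y // (⟨tabAct y.1 T₀, CBAux.isTabloid_act _ hT₀⟩ :
          ↥{T | IsTabloid G n σ ρ T}) = b} ≃ {y : Wr G n // y ∈ Y ∧ tabAct y T₀ = b.1} := by
        refine ⟨fun x => ⟨x.1.1, x.1.2, congrArg Subtype.val x.2⟩,
          fun x => ⟨⟨x.1, x.2.1⟩, Subtype.ext x.2.2⟩, ?_, ?_⟩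
        · intro x; rfl
        · intro x; rfl
      rw [Nat.card_congr e]
      exact htr T₀ hT₀ b.1 b.2
    have hge : Nat.card (Wr G n) ≤ Nat.card Y * Nat.card H := by
      calc Nat.card (Wr G n)
          ≤ c * Nat.card (Wr G n) := Nat.le_mul_of_pos_left _ hc
        _ = Nat.card Y * Nat.card H := by rw [hcardW, hcardY]; ring
    exact le_antisymm hle hge
end

section
/- Let G be a nontrivial finite abelian group, n ≥ 1, let (σ,ρ) be a double partition of n, let H be the stabiliser in W = G ≀ S_n of some fixed (σ,ρ)-tabloid, and let Y be a nonempty (σ,ρ)-transitive subset of W. Then |Y|·|H| ≥ |W|, and equality holds if and only if Y is a (σ,ρ)-clique, i.e., for all distinct x, y ∈ Y the element x⁻¹y stabilises no (σ,ρ)-tabloid; moreover, in case of equality Y is sharply (σ,ρ)-transitive (the transitivity constant is 1). -/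
section DBAux

variable {G : Type} [CommGroup G] {n : ℕ}

lemma WrAux.finite [Fintype G] : Finite (Wr G n) :=
  Finite.of_equiv ((Fin n → G) × Equiv.Perm (Fin n))
    ⟨fun p => ⟨p.1, p.2⟩, fun w => (w.left, w.right), fun p => rfl, fun w => rfl⟩

lemma tabAct_mul (u v : Wr G n) (T : (Fin n → ℕ ⊕ ℕ) × (Fin n → G)) :
    tabAct (u * v) T = tabAct u (tabAct v T) := by
  have hr : ∀ a : Fin n, (u * v).right⁻¹ a = v.right⁻¹ (u.right⁻¹ a) := by
    intro a
    simp [SemidirectProduct.mul_right, mul_inv_rev, Equiv.Perm.mul_apply]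
  have hl : ∀ a : Fin n, (u * v).left a = u.left a * v.left (u.right⁻¹ a) := by
    intro a; rw [SemidirectProduct.mul_left]; rfl
  refine Prod.ext (funext fun a => ?_) (funext fun a => ?_)
  · show T.1 ((u * v).right⁻¹ a) = T.1 (v.right⁻¹ (u.right⁻¹ a))
    rw [hr]
  · simp only [tabAct, hr, hl]
    rcases h : T.1 (v.right⁻¹ (u.right⁻¹ a)) with i | j <;>
      simp [h, mul_comm, mul_left_comm, mul_assoc]

lemma tabAct_one {T : (Fin n → ℕ ⊕ ℕ) × (Fin n → G)}
    (hT : ∀ a j, T.1 a = Sum.inr j → T.2 a = 1) :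
    tabAct (1 : Wr G n) T = T := by
  refine Prod.ext (funext fun a => ?_) (funext fun a => ?_)
  · show T.1 ((1 : Wr G n).right⁻¹ a) = T.1 a
    simp
  · have hr : (1 : Wr G n).right⁻¹ a = a := by simp
    simp only [tabAct, hr]
    rcases h : T.1 a with i | j
    · simp [h]
    · simp [h, (hT a j h).symm]

lemma isTabloid_tabAct {σ ρ : Multiset ℕ} (w : Wr G n)
    {T : (Fin n → ℕ ⊕ ℕ) × (Fin n → G)} (hT : IsTabloid G n σ ρ T) :
    IsTabloid G n σ ρ (tabAct w T) := by
  obtain ⟨h1, h2, h3⟩ := hT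
  refine ⟨fun i => ?_, fun j => ?_, fun a j h => ?_⟩
  · rw [← h1 i]
    exact Nat.card_congr (Equiv.subtypeEquiv (w.right⁻¹ : Equiv.Perm (Fin n)) fun a => Iff.rfl)
  · rw [← h2 j]
    exact Nat.card_congr (Equiv.subtypeEquiv (w.right⁻¹ : Equiv.Perm (Fin n)) fun a => Iff.rfl)
  · have h' : T.1 (w.right⁻¹ a) = Sum.inr j := h
    have h'' : T.1 ((Equiv.symm w.right) a) = Sum.inr j := h'
    simp only [tabAct]
    simp [h', h'']

lemma tabAct_inv_tabAct {σ ρ : Multiset ℕ} (w : Wr G n)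
    {T : (Fin n → ℕ ⊕ ℕ) × (Fin n → G)} (hT : IsTabloid G n σ ρ T) :
    tabAct w⁻¹ (tabAct w T) = T := by
  rw [← tabAct_mul, inv_mul_cancel]
  exact tabAct_one hT.2.2

lemma exists_tabAct_eq {σ ρ : Multiset ℕ} {T T' : (Fin n → ℕ ⊕ ℕ) × (Fin n → G)}
    (hT : IsTabloid G n σ ρ T) (hT' : IsTabloid G n σ ρ T') :
    ∃ w : Wr G n, tabAct w T = T' := by
  classical
  have hcard : ∀ c : ℕ ⊕ ℕ,
      Nat.card {a : Fin n // T.1 a = c} = Nat.card {a : Fin n // T'.1 a = c} := by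
    rintro (i | j)
    · rw [hT.1 i, hT'.1 i]
    · rw [hT.2.1 j, hT'.2.1 j]
  have hfib : ∀ c : ℕ ⊕ ℕ,
      Nonempty ({a : Fin n // T.1 a = c} ≃ {a : Fin n // T'.1 a = c}) :=
    fun c => Finite.card_eq.mp (hcard c)
  let e : ∀ c : ℕ ⊕ ℕ, {a : Fin n // T.1 a = c} ≃ {a : Fin n // T'.1 a = c} :=
    fun c => (hfib c).some
  let π : Fin n ≃ Fin n := Equiv.ofFiberEquiv e
  have hπ : ∀ a, T'.1 (π a) = T.1 a := fun a => Equiv.ofFiberEquiv_map e a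
  refine ⟨⟨fun a => (T.2 (π.symm a))⁻¹ * T'.2 a, π⟩, ?_⟩
  have hright : ∀ a, ((⟨fun a => (T.2 (π.symm a))⁻¹ * T'.2 a, π⟩ : Wr G n).right⁻¹ a)
      = π.symm a := fun a => rfl
  have hfst : ∀ a, T.1 (π.symm a) = T'.1 a := by
    intro a
    have h := hπ (π.symm a)
    rw [Equiv.apply_symm_apply] at h
    exact h.symm
  refine Prod.ext (funext fun a => ?_) (funext fun a => ?_)
  · show T.1 (π.symm a) = T'.1 a
    exact hfst a
  · simp only [tabAct, hright]
    rcases h : T.1 (π.symm a) with i | j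
    · simp [h]
    · have h2 : T'.1 a = Sum.inr j := by rw [← hfst a, h]
      simp [h, (hT'.2.2 a j h2).symm]

lemma card_eq_sum_fibers {α β : Type*} [Finite α] [Fintype β] (f : α → β) :
    Nat.card α = ∑ b, Nat.card {a // f a = b} := by
  classical
  letI := Fintype.ofFinite α
  calc Nat.card α = Nat.card (Σ b : β, {a // f a = b}) :=
        Nat.card_congr (Equiv.sigmaFiberEquiv f).symm
    _ = ∑ b, Nat.card {a // f a = b} := by
        simp [Nat.card_eq_fintype_card, Fintype.card_sigma]

end DBAux

/-- **Design bound (Theorem on `(σ,ρ)`-transitive sets).**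
Let `G` be a nontrivial finite abelian group, `(σ,ρ)` a double partition of `n ≥ 1`,
`H` the stabiliser in `W = G ≀ Sₙ` of a fixed `(σ,ρ)`-tabloid `T₀`, and `Y` a nonempty
`(σ,ρ)`-transitive subset of `W`.  Then `|Y|·|H| ≥ |W|`; equality holds iff `Y` is a
`(σ,ρ)`-clique (no quotient `x⁻¹y` of distinct elements of `Y` stabilises any
`(σ,ρ)`-tabloid); and in case of equality `Y` is sharply `(σ,ρ)`-transitive. -/
theorem design_bound (G : Type) [CommGroup G] [Fintype G] [Nontrivial G]
    (n : ℕ) (hn : 1 ≤ n) (σ ρ : Multiset ℕ) (hσ0 : 0 ∉ σ) (hρ0 : 0 ∉ ρ)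
    (hsum : σ.sum + ρ.sum = n)
    (T₀ : (Fin n → ℕ ⊕ ℕ) × (Fin n → G)) (hT₀ : IsTabloid G n σ ρ T₀)
    (Y : Set (Wr G n)) (hY : Y.Nonempty)
    (htrans : DPTransitive G n σ ρ Y) :
    Nat.card (Wr G n) ≤ Nat.card Y * Nat.card {w : Wr G n | tabAct w T₀ = T₀} ∧
    (Nat.card Y * Nat.card {w : Wr G n | tabAct w T₀ = T₀} = Nat.card (Wr G n) ↔
      ∀ x ∈ Y, ∀ y ∈ Y, x ≠ y → ∀ T, IsTabloid G n σ ρ T → tabAct (x⁻¹ * y) T ≠ T) ∧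
    (Nat.card Y * Nat.card {w : Wr G n | tabAct w T₀ = T₀} = Nat.card (Wr G n) →
      ∀ a, IsTabloid G n σ ρ a → ∀ b, IsTabloid G n σ ρ b →
        Nat.card {y : Wr G n // y ∈ Y ∧ tabAct y a = b} = 1) := by
  classical
  obtain ⟨c, hc, hcc⟩ := htrans
  haveI : Finite (Wr G n) := WrAux.finite
  let Ω := {T : (Fin n → ℕ ⊕ ℕ) × (Fin n → G) // IsTabloid G n σ ρ T}
  have hsurj : Function.Surjective
      (fun w : Wr G n => (⟨tabAct w T₀, isTabloid_tabAct w hT₀⟩ : Ω)) := by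
    rintro ⟨T, hT⟩
    obtain ⟨w, hw⟩ := exists_tabAct_eq hT₀ hT
    exact ⟨w, Subtype.ext hw⟩
  haveI : Finite Ω := Finite.of_surjective _ hsurj
  letI : Fintype Ω := Fintype.ofFinite Ω
  have hfibW : ∀ b : Ω, Nat.card {w : Wr G n // tabAct w T₀ = b.1}
      = Nat.card {w : Wr G n | tabAct w T₀ = T₀} := by
    intro b
    obtain ⟨u, hu⟩ := exists_tabAct_eq hT₀ b.2
    refine Nat.card_congr ⟨fun w => ⟨u⁻¹ * w.1, ?_⟩, fun w => ⟨u * w.1, ?_⟩, ?_, ?_⟩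
    · show tabAct (u⁻¹ * w.1) T₀ = T₀
      rw [tabAct_mul, w.2, ← hu]
      exact tabAct_inv_tabAct u hT₀
    · show tabAct (u * w.1) T₀ = b.1
      have hw : tabAct w.1 T₀ = T₀ := w.2
      rw [tabAct_mul, hw, hu]
    · intro w
      exact Subtype.ext (mul_inv_cancel_left u w.1)
    · intro w
      exact Subtype.ext (inv_mul_cancel_left u w.1)
  have hW : Nat.card (Wr G n)
      = Fintype.card Ω * Nat.card {w : Wr G n | tabAct w T₀ = T₀} := by
    rw [card_eq_sum_fibers (fun w : Wr G n => (⟨tabAct w T₀, isTabloid_tabAct w hT₀⟩ : Ω))]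
    calc (∑ b : Ω, Nat.card
            {w : Wr G n // (⟨tabAct w T₀, isTabloid_tabAct w hT₀⟩ : Ω) = b})
        = ∑ _b : Ω, Nat.card {w : Wr G n | tabAct w T₀ = T₀} := by
          refine Finset.sum_congr rfl fun b _ => ?_
          rw [← hfibW b]
          exact Nat.card_congr (Equiv.subtypeEquivRight fun w => Subtype.ext_iff)
      _ = Fintype.card Ω * Nat.card {w : Wr G n | tabAct w T₀ = T₀} := by
          rw [Finset.sum_const, Finset.card_univ, smul_eq_mul]
  have hYc : Nat.card Y = Fintype.card Ω * c := by
    rw [card_eq_sum_fibers (fun y : Y => (⟨tabAct y.1 T₀, isTabloid_tabAct y.1 hT₀⟩ : Ω))]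
    calc (∑ b : Ω, Nat.card
            {y : Y // (⟨tabAct y.1 T₀, isTabloid_tabAct y.1 hT₀⟩ : Ω) = b})
        = ∑ b : Ω, c := by
          refine Finset.sum_congr rfl fun b _ => ?_
          have he : {y : Y // (⟨tabAct y.1 T₀, isTabloid_tabAct y.1 hT₀⟩ : Ω) = b}
              ≃ {y : Wr G n // y ∈ Y ∧ tabAct y T₀ = b.1} :=
            ⟨fun p => ⟨p.1.1, p.1.2, congrArg Subtype.val p.2⟩,
             fun p => ⟨⟨p.1, p.2.1⟩, Subtype.ext p.2.2⟩,
             fun p => rfl, fun p => rfl⟩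
          rw [Nat.card_congr he]
          exact hcc T₀ hT₀ b.1 b.2
      _ = Fintype.card Ω * c := by
          rw [Finset.sum_const, Finset.card_univ, smul_eq_mul]
  have hkey : Nat.card Y * Nat.card {w : Wr G n | tabAct w T₀ = T₀}
      = c * Nat.card (Wr G n) := by
    rw [hYc, hW]; ring
  have hWpos : 0 < Nat.card (Wr G n) := Nat.card_pos
  have heqiff : Nat.card Y * Nat.card {w : Wr G n | tabAct w T₀ = T₀}
      = Nat.card (Wr G n) ↔ c = 1 := by
    rw [hkey]
    constructor
    · intro h
      exact Nat.eq_of_mul_eq_mul_right hWpos (by rw [h, one_mul])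
    · intro h
      rw [h, one_mul]
  refine ⟨?_, ?_, ?_⟩
  · rw [hkey]
    exact Nat.le_mul_of_pos_left _ hc
  · rw [heqiff]
    constructor
    · intro h1 x hx y hy hxy T hT heq
      have hb : IsTabloid G n σ ρ (tabAct x T) := isTabloid_tabAct x hT
      have h2 : Nat.card {z : Wr G n // z ∈ Y ∧ tabAct z T = tabAct x T} = 1 := by
        rw [hcc T hT _ hb, h1]
      have hyx : tabAct y T = tabAct x T := by
        have h3 : tabAct (x * (x⁻¹ * y)) T = tabAct x (tabAct (x⁻¹ * y) T) :=
          tabAct_mul x (x⁻¹ * y) T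
        rw [heq, show x * (x⁻¹ * y) = y by group] at h3
        exact h3
      have hnt : Nontrivial {z : Wr G n // z ∈ Y ∧ tabAct z T = tabAct x T} :=
        ⟨⟨⟨x, hx, rfl⟩, ⟨y, hy, hyx⟩, fun h => hxy (congrArg Subtype.val h)⟩⟩
      have := Finite.one_lt_card (α := {z : Wr G n // z ∈ Y ∧ tabAct z T = tabAct x T})
      omega
    · intro hcl
      have h2 : Nat.card {z : Wr G n // z ∈ Y ∧ tabAct z T₀ = T₀} = c :=
        hcc T₀ hT₀ T₀ hT₀
      have hsub : Subsingleton {z : Wr G n // z ∈ Y ∧ tabAct z T₀ = T₀} := by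
        constructor
        rintro ⟨x, hx, hx2⟩ ⟨y, hy, hy2⟩
        by_contra hne
        have hxy : x ≠ y := fun h => hne (by subst h; rfl)
        apply hcl x hx y hy hxy T₀ hT₀
        have h3 : tabAct x (tabAct (x⁻¹ * y) T₀) = tabAct x T₀ := by
          rw [← tabAct_mul, show x * (x⁻¹ * y) = y by group, hy2, hx2]
        calc tabAct (x⁻¹ * y) T₀
            = tabAct x⁻¹ (tabAct x (tabAct (x⁻¹ * y) T₀)) :=
              (tabAct_inv_tabAct x (isTabloid_tabAct _ hT₀)).symm
          _ = tabAct x⁻¹ (tabAct x T₀) := by rw [h3]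
          _ = T₀ := tabAct_inv_tabAct x hT₀
      have hle : Nat.card {z : Wr G n // z ∈ Y ∧ tabAct z T₀ = T₀} ≤ 1 := by
        rcases isEmpty_or_nonempty {z : Wr G n // z ∈ Y ∧ tabAct z T₀ = T₀} with h | h
        · simp [Nat.card_of_isEmpty]
        · exact le_of_eq Nat.card_unique
      omega
  · intro heq a ha b hb
    have hc1 : c = 1 := heqiff.mp heq
    rw [hcc a ha b hb, hc1]
end

section
/- Let G be a nontrivial finite abelian group and let (σ,ρ) be a double partition. Then for every integer partition α, (σ∪α, ρ) ≽_G (σ, ρ∪α), both being double partitions of n = |σ| + |ρ| + |α|. -/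
-- ============ auxiliary development ============
namespace UnionRuleAux

instance (G : Type) [CommGroup G] [Fintype G] (n : ℕ) : Finite (Wr G n) :=
  Finite.of_injective (fun w : Wr G n => (w.left, w.right))
    (fun a b h => SemidirectProduct.ext (congrArg Prod.fst h) (congrArg Prod.snd h))

def upFun (rσ rρ : ℕ) : ℕ ⊕ ℕ → ℕ ⊕ ℕ
  | Sum.inl i => Sum.inl (if i < rσ then i else i + 1)
  | Sum.inr j => if j < rρ then Sum.inr j else if j = rρ then Sum.inl rσ else Sum.inr (j - 1)

def downFun (rσ rρ : ℕ) : ℕ ⊕ ℕ → ℕ ⊕ ℕ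
  | Sum.inl i => if i < rσ then Sum.inl i else if i = rσ then Sum.inr rρ else Sum.inl (i - 1)
  | Sum.inr j => if j < rρ then Sum.inr j else Sum.inr (j + 1)

/-- the relabeling bijection on block indices -/
def upE (rσ rρ : ℕ) : (ℕ ⊕ ℕ) ≃ (ℕ ⊕ ℕ) where
  toFun := upFun rσ rρ
  invFun := downFun rσ rρ
  left_inv k := by
    rcases k with i | j
    · by_cases h : i < rσ
      · simp [upFun, downFun, h]
      · have h1 : ¬ i + 1 < rσ := by omega
        have h2 : ¬ i + 1 = rσ := by omega
        simp [upFun, downFun, h, h1, h2]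
    · rcases lt_trichotomy j rρ with h | h | h
      · simp [upFun, downFun, h]
      · subst h; simp [upFun, downFun]
      · have h1 : ¬ j < rρ := by omega
        have h2 : ¬ j = rρ := by omega
        have h3 : ¬ j - 1 < rρ := by omega
        simp only [upFun, downFun, if_neg h1, if_neg h2, if_neg h3]
        congr 1
        omega
  right_inv k := by
    rcases k with i | j
    · rcases lt_trichotomy i rσ with h | h | h
      · simp [upFun, downFun, h]
      · subst h; simp [upFun, downFun]
      · have h1 : ¬ i < rσ := by omega
        have h2 : ¬ i = rσ := by omega
        have h3 : i - 1 < rσ ∨ ¬ i - 1 < rσ := em _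
        simp only [upFun, downFun, if_neg h1, if_neg h2]
        by_cases h4 : i - 1 < rσ
        · omega
        · simp only [if_neg h4]
          congr 1
          omega
    · by_cases h : j < rρ
      · simp [upFun, downFun, h]
      · have h1 : ¬ j + 1 < rρ := by omega
        have h2 : ¬ j + 1 = rρ := by omega
        by_cases h3 : j + 1 = rρ
        · omega
        · simp [upFun, downFun, h, h1, h2]

lemma upE_apply (rσ rρ : ℕ) (k : ℕ ⊕ ℕ) : upE rσ rρ k = upFun rσ rρ k := rfl

lemma upE_symm_apply (rσ rρ : ℕ) (k : ℕ ⊕ ℕ) : (upE rσ rρ).symm k = downFun rσ rρ k := rfl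

lemma upE_symm_inr' (rσ rρ j : ℕ) :
    ∃ j', (upE rσ rρ).symm (Sum.inr j) = Sum.inr j' ∧ j' ≠ rρ := by
  rw [upE_symm_apply]
  simp only [downFun]
  split_ifs with h
  · exact ⟨j, rfl, by omega⟩
  · exact ⟨j + 1, rfl, by omega⟩

lemma upE_inr_ne (rσ rρ j : ℕ) (h : j ≠ rρ) :
    ∃ j', upE rσ rρ (Sum.inr j) = Sum.inr j' := by
  rw [upE_apply]
  simp only [upFun]
  by_cases h1 : j < rρ
  · simp only [if_pos h1]; exact ⟨j, rfl⟩
  · simp only [if_neg h1, if_neg h]; exact ⟨j - 1, rfl⟩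

variable {G : Type} [CommGroup G] [Fintype G] {n : ℕ}

/-- combined block sizes -/
def dpp (σ ρ : Multiset ℕ) : ℕ ⊕ ℕ → ℕ := Sum.elim (dparts σ) (dparts ρ)

omit [Fintype G] in
lemma isTabloid_iff {σ ρ : Multiset ℕ} {T : (Fin n → ℕ ⊕ ℕ) × (Fin n → G)} :
    IsTabloid G n σ ρ T ↔
      (∀ k, Nat.card {a : Fin n // T.1 a = k} = dpp σ ρ k) ∧
      (∀ a j, T.1 a = Sum.inr j → T.2 a = 1) := by
  constructor
  · rintro ⟨h1, h2, h3⟩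
    exact ⟨fun k => by rcases k with i | j; exacts [h1 i, h2 j], h3⟩
  · rintro ⟨h1, h3⟩
    exact ⟨fun i => h1 (Sum.inl i), fun j => h1 (Sum.inr j), h3⟩

omit [Fintype G] in
lemma tabAct_fst (w : Wr G n) (T : (Fin n → ℕ ⊕ ℕ) × (Fin n → G)) (a : Fin n) :
    (tabAct w T).1 a = T.1 (w.right⁻¹ a) := rfl

omit [Fintype G] in
lemma tabAct_snd (w : Wr G n) (T : (Fin n → ℕ ⊕ ℕ) × (Fin n → G)) (a : Fin n) :
    (tabAct w T).2 a = (match T.1 (w.right⁻¹ a) with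
      | Sum.inl _ => T.2 (w.right⁻¹ a) * w.left a
      | Sum.inr _ => 1) := rfl

omit [Fintype G] in
lemma tabAct_snd_inl {w : Wr G n} {T : (Fin n → ℕ ⊕ ℕ) × (Fin n → G)} {a : Fin n} {i : ℕ}
    (h : T.1 (w.right⁻¹ a) = Sum.inl i) :
    (tabAct w T).2 a = T.2 (w.right⁻¹ a) * w.left a := by
  rw [tabAct_snd]; simp only [h]

omit [Fintype G] in
lemma tabAct_snd_inr {w : Wr G n} {T : (Fin n → ℕ ⊕ ℕ) × (Fin n → G)} {a : Fin n} {j : ℕ}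
    (h : T.1 (w.right⁻¹ a) = Sum.inr j) :
    (tabAct w T).2 a = 1 := by
  rw [tabAct_snd]; simp only [h]

omit [Fintype G] in
/-- tabAct preserves tabloids -/
lemma isTabloid_tabAct {σ ρ : Multiset ℕ} {T : (Fin n → ℕ ⊕ ℕ) × (Fin n → G)}
    (hT : IsTabloid G n σ ρ T) (w : Wr G n) : IsTabloid G n σ ρ (tabAct w T) := by
  rw [isTabloid_iff] at hT ⊢
  refine ⟨fun k => ?_, fun a j h => ?_⟩
  · rw [← hT.1 k]
    exact Nat.card_congr (Equiv.subtypeEquiv (w.right⁻¹ : Equiv.Perm (Fin n))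
      (fun a => Iff.rfl))
  · exact tabAct_snd_inr h

section Step

variable (σ ρ : Multiset ℕ) (x : ℕ) (rσ rρ : ℕ)

/-- the lift of a `(σ, x::ₘρ)`-tabloid to a `(x::ₘσ, ρ)`-tabloid with colours `g`
on the moved block -/
def liftT (T : (Fin n → ℕ ⊕ ℕ) × (Fin n → G)) (g : Fin n → G) :
    (Fin n → ℕ ⊕ ℕ) × (Fin n → G) :=
  ⟨fun a => upE rσ rρ (T.1 a), fun a => if T.1 a = Sum.inr rρ then g a else T.2 a⟩

def downT (T' : (Fin n → ℕ ⊕ ℕ) × (Fin n → G)) :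
    (Fin n → ℕ ⊕ ℕ) × (Fin n → G) :=
  ⟨fun a => (upE rσ rρ).symm (T'.1 a),
   fun a => match (upE rσ rρ).symm (T'.1 a) with
     | Sum.inl _ => T'.2 a
     | Sum.inr _ => 1⟩

omit [Fintype G] in
lemma liftT_fst (T : (Fin n → ℕ ⊕ ℕ) × (Fin n → G)) (g : Fin n → G) (a : Fin n) :
    (liftT rσ rρ T g).1 a = upE rσ rρ (T.1 a) := rfl

omit [Fintype G] in
lemma liftT_snd (T : (Fin n → ℕ ⊕ ℕ) × (Fin n → G)) (g : Fin n → G) (a : Fin n) :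
    (liftT rσ rρ T g).2 a = if T.1 a = Sum.inr rρ then g a else T.2 a := rfl

omit [Fintype G] in
lemma downT_fst (T' : (Fin n → ℕ ⊕ ℕ) × (Fin n → G)) (a : Fin n) :
    (downT rσ rρ T').1 a = (upE rσ rρ).symm (T'.1 a) := rfl

omit [Fintype G] in
lemma downT_snd (T' : (Fin n → ℕ ⊕ ℕ) × (Fin n → G)) (a : Fin n) :
    (downT rσ rρ T').2 a = (match (upE rσ rρ).symm (T'.1 a) with
     | Sum.inl _ => T'.2 a
     | Sum.inr _ => 1) := rfl

omit [Fintype G] in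
lemma down_lift {T : (Fin n → ℕ ⊕ ℕ) × (Fin n → G)} (hT : IsTabloid G n σ (x ::ₘ ρ) T)
    (g : Fin n → G) : downT rσ rρ (liftT rσ rρ T g) = T := by
  refine Prod.ext (funext fun a => by simp [downT_fst, liftT_fst]) (funext fun a => ?_)
  rw [downT_snd, liftT_fst, Equiv.symm_apply_apply]
  rcases h : T.1 a with i | j
  · simp only [liftT_snd, h]
    simp
  · simp only [h]
    exact (hT.2.2 a j h).symm

omit [Fintype G] in
lemma down_tabAct (w : Wr G n) (T' : (Fin n → ℕ ⊕ ℕ) × (Fin n → G)) :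
    downT rσ rρ (tabAct w T') = tabAct w (downT rσ rρ T') := by
  refine Prod.ext (funext fun a => rfl) (funext fun a => ?_)
  rw [downT_snd, tabAct_fst]
  rcases h : T'.1 (w.right⁻¹ a) with i | j
  · rcases h2 : (upE rσ rρ).symm (Sum.inl i) with i' | j'
    · simp only [h2]
      rw [tabAct_snd_inl h, tabAct_snd_inl (show (downT rσ rρ T').1 (w.right⁻¹ a) = Sum.inl i'
          by rw [downT_fst, h, h2]), downT_snd, h, h2]
    · simp only [h2]
      rw [(tabAct_snd_inr (show (downT rσ rρ T').1 (w.right⁻¹ a) = Sum.inr j'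
          by rw [downT_fst, h, h2])).symm]
  · obtain ⟨j', hj', -⟩ := upE_symm_inr' rσ rρ j
    rw [hj']
    rw [(tabAct_snd_inr (show (downT rσ rρ T').1 (w.right⁻¹ a) = Sum.inr j'
        by rw [downT_fst, h, hj'])).symm]

end Step

end UnionRuleAux

namespace UnionRuleAux

lemma sort_cons_eq (x : ℕ) (s : Multiset ℕ) :
    (x ::ₘ s).sort (· ≤ ·) = (s.sort (· ≤ ·)).orderedInsert (· ≤ ·) x := by
  refine List.Perm.eq_of_pairwise' (Multiset.pairwise_sort _ _)
    ((Multiset.pairwise_sort s _).orderedInsert x _) ?_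
  have h1 : List.Perm ((x ::ₘ s).sort (· ≤ ·)) (x :: s.sort (· ≤ ·)) := by
    rw [← Multiset.coe_eq_coe]
    simp [Multiset.sort_eq, ← Multiset.cons_coe]
  exact h1.trans (List.perm_orderedInsert (· ≤ ·) x _).symm

lemma dparts_cons (x : ℕ) (s : Multiset ℕ) :
    ∃ r : ℕ, (∀ i, i < r → dparts (x ::ₘ s) i = dparts s i) ∧
      dparts (x ::ₘ s) r = x ∧
      (∀ i, r < i → dparts (x ::ₘ s) i = dparts s (i - 1)) := by
  classical
  set L := s.sort (· ≤ ·) with hL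
  set T := L.takeWhile (fun b => decide ¬ x ≤ b) with hT
  set D := L.dropWhile (fun b => decide ¬ x ≤ b) with hD
  have hsplit : L = T ++ D := List.takeWhile_append_dropWhile.symm
  have hsort : (x ::ₘ s).sort (· ≤ ·) = T ++ x :: D := by
    rw [sort_cons_eq, List.orderedInsert_eq_take_drop]
  have hrev : ((x ::ₘ s).sort (· ≤ ·)).reverse = D.reverse ++ ([x] ++ T.reverse) := by
    rw [hsort]; simp
  have hrevs : L.reverse = D.reverse ++ T.reverse := by
    conv_lhs => rw [hsplit]
    simp
  refine ⟨D.length, ?_, ?_, ?_⟩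
  · intro i hi
    unfold dparts
    rw [hrev, ← hL, hrevs]
    rw [List.getD_append _ _ _ _ (by simpa using hi), List.getD_append _ _ _ _ (by simpa using hi)]
  · unfold dparts
    rw [hrev, List.getD_append_right _ _ _ _ (by simp)]
    simp
  · intro i hi
    unfold dparts
    rw [hrev, ← hL, hrevs]
    rw [List.getD_append_right _ _ _ _ (by simp; omega),
        List.getD_append_right _ _ _ _ (by simp; omega),
        List.getD_append_right _ _ _ _ (by simp; omega)]
    congr 1
    simp
    omega

lemma nat_card_sigma {ι : Type} [Fintype ι] (f : ι → Type) [∀ i, Finite (f i)] :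
    Nat.card ((i : ι) × f i) = ∑ i, Nat.card (f i) := by
  letI : ∀ i, Fintype (f i) := fun i => Fintype.ofFinite _
  simp [Nat.card_eq_fintype_card]

section Step2

variable {G : Type} [CommGroup G] [Fintype G] {n : ℕ}
variable (σ ρ : Multiset ℕ) (x rσ rρ : ℕ)
variable (hσ1 : ∀ i, i < rσ → dparts (x ::ₘ σ) i = dparts σ i) (hσ2 : dparts (x ::ₘ σ) rσ = x)
variable (hσ3 : ∀ i, rσ < i → dparts (x ::ₘ σ) i = dparts σ (i - 1))
variable (hρ1 : ∀ j, j < rρ → dparts (x ::ₘ ρ) j = dparts ρ j) (hρ2 : dparts (x ::ₘ ρ) rρ = x)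
variable (hρ3 : ∀ j, rρ < j → dparts (x ::ₘ ρ) j = dparts ρ (j - 1))

include hσ1 hσ2 hσ3 hρ1 hρ2 hρ3 in
lemma compat : ∀ k, dpp (x ::ₘ σ) ρ k = dpp σ (x ::ₘ ρ) ((upE rσ rρ).symm k) := by
  rintro (i | j)
  · rw [upE_symm_apply]
    simp only [downFun, dpp, Sum.elim_inl]
    split_ifs with h1 h2
    · simp only [Sum.elim_inl]; exact hσ1 i h1
    · subst h2; simp only [Sum.elim_inr]; rw [hσ2, hρ2]
    · simp only [Sum.elim_inl]; rw [hσ3 i (by omega)]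
  · rw [upE_symm_apply]
    simp only [downFun, dpp, Sum.elim_inr]
    split_ifs with h1
    · simp only [Sum.elim_inr]; exact (hρ1 j h1).symm
    · simp only [Sum.elim_inr]; rw [hρ3 (j + 1) (by omega)]; simp

include hσ1 hσ2 hσ3 hρ1 hρ2 hρ3 in
lemma liftT_tabloid {T : (Fin n → ℕ ⊕ ℕ) × (Fin n → G)} (g : Fin n → G)
    (hT : IsTabloid G n σ (x ::ₘ ρ) T) :
    IsTabloid G n (x ::ₘ σ) ρ (liftT rσ rρ T g) := by
  rw [isTabloid_iff] at hT ⊢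
  refine ⟨fun k => ?_, fun a j h => ?_⟩
  · have hiff : ∀ a : Fin n, ((liftT rσ rρ T g).1 a = k) ↔ (T.1 a = (upE rσ rρ).symm k) := by
      intro a
      rw [liftT_fst]
      exact (upE rσ rρ).apply_eq_iff_eq_symm_apply
    rw [Nat.card_congr (Equiv.subtypeEquivRight hiff), hT.1,
      ← compat σ ρ x rσ rρ hσ1 hσ2 hσ3 hρ1 hρ2 hρ3]
  · rw [liftT_fst] at h
    have h2 : T.1 a = (upE rσ rρ).symm (Sum.inr j) := by rw [← h]; simp
    obtain ⟨j', hj', hne⟩ := upE_symm_inr' rσ rρ j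
    rw [hj'] at h2
    rw [liftT_snd, if_neg (by rw [h2]; simp [hne]), hT.2 a j' h2]

lemma act_lift {A B : (Fin n → ℕ ⊕ ℕ) × (Fin n → G)}
    (hA : IsTabloid G n σ (x ::ₘ ρ) A)
    (y : Wr G n) (hy : tabAct y A = B) :
    tabAct y (liftT rσ rρ A 1) =
      liftT rσ rρ B (fun a => (tabAct y (liftT rσ rρ A 1)).2 a) := by
  set A₀ := liftT rσ rρ A 1 with hA₀
  refine Prod.ext (funext fun a => ?_) (funext fun a => ?_)
  · show (upE rσ rρ) (A.1 (y.right⁻¹ a)) = (upE rσ rρ) (B.1 a)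
    rw [← hy]
    rfl
  · by_cases hb : B.1 a = Sum.inr rρ
    · rw [liftT_snd, if_pos hb]
    · rw [liftT_snd, if_neg hb]
      have hA1 : A.1 (y.right⁻¹ a) = B.1 a := by rw [← hy]; rfl
      rcases h : B.1 a with i | j
      · have hup : A₀.1 (y.right⁻¹ a) = Sum.inl (if i < rσ then i else i + 1) := by
          rw [hA₀, liftT_fst, hA1, h, upE_apply]; rfl
        rw [tabAct_snd_inl hup, ← hy, tabAct_snd_inl (by rw [hA1, h])]
        congr 1
        rw [hA₀, liftT_snd, if_neg (by rw [hA1, h]; simp)]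
      · have hjne : j ≠ rρ := fun hh => hb (by rw [h, hh])
        obtain ⟨j', hj'⟩ := upE_inr_ne rσ rρ j hjne
        have hup : A₀.1 (y.right⁻¹ a) = Sum.inr j' := by rw [hA₀, liftT_fst, hA1, h, hj']
        rw [tabAct_snd_inr hup, ← hy, tabAct_snd_inr (by rw [hA1, h])]

end Step2

lemma step (G : Type) [CommGroup G] [Fintype G] (n : ℕ) (σ ρ : Multiset ℕ) (x : ℕ) :
    DPDom G n (x ::ₘ σ) ρ σ (x ::ₘ ρ) := by
  classical
  obtain ⟨rσ, hσ1, hσ2, hσ3⟩ := dparts_cons x σ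
  obtain ⟨rρ, hρ1, hρ2, hρ3⟩ := dparts_cons x ρ
  rintro Y ⟨c, hc, hY⟩
  refine ⟨Fintype.card G ^ x * c, by positivity, fun A hA B hB => ?_⟩
  simp only [Set.mem_setOf_eq] at hA hB
  set Blk := {a : Fin n // B.1 a = Sum.inr rρ} with hBlk
  have hBlkcard : Nat.card Blk = x := by rw [hBlk]; rw [hB.2.1 rρ, hρ2]
  set ext : (Blk → G) → (Fin n → G) :=
    fun g a => if h : B.1 a = Sum.inr rρ then g ⟨a, h⟩ else 1 with hext
  set A₀ := liftT rσ rρ A 1 with hA₀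
  have hA₀tab : IsTabloid G n (x ::ₘ σ) ρ A₀ :=
    liftT_tabloid σ ρ x rσ rρ hσ1 hσ2 hσ3 hρ1 hρ2 hρ3 1 hA
  have hBtab' : ∀ g : Blk → G, IsTabloid G n (x ::ₘ σ) ρ (liftT rσ rρ B (ext g)) :=
    fun g => liftT_tabloid σ ρ x rσ rρ hσ1 hσ2 hσ3 hρ1 hρ2 hρ3 (ext g) hB
  have e1 : {y : Wr G n // y ∈ Y ∧ tabAct y A = B} ≃
      {p : Wr G n × (Blk → G) // p.1 ∈ Y ∧ tabAct p.1 A₀ = liftT rσ rρ B (ext p.2)} := by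
    refine ⟨fun y => ⟨(y.1, fun a => (tabAct y.1 A₀).2 a.1), y.2.1, ?_⟩,
      fun p => ⟨p.1.1, p.2.1, ?_⟩, fun y => Subtype.ext rfl, fun p => Subtype.ext ?_⟩
    · have hkey := act_lift σ ρ x rσ rρ hA y.1 y.2.2
      rw [← hA₀] at hkey
      refine hkey.trans (Prod.ext rfl (funext fun a => ?_))
      rw [liftT_snd, liftT_snd]
      by_cases hb : B.1 a = Sum.inr rρ
      · rw [if_pos hb, if_pos hb, hext]
        simp only [dif_pos hb]
      · rw [if_neg hb, if_neg hb]
    · have h3 : downT rσ rρ (tabAct p.1.1 A₀) =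
          downT rσ rρ (liftT rσ rρ B (ext p.1.2)) := congrArg _ p.2.2
      have h4 : tabAct p.1.1 (downT rσ rρ A₀) = B := by
        rw [← down_tabAct, h3, down_lift σ ρ x rσ rρ hB (ext p.1.2)]
      have h5 : downT rσ rρ A₀ = A := down_lift σ ρ x rσ rρ hA 1
      rwa [h5] at h4
    · refine Prod.ext rfl (funext fun a => ?_)
      show (tabAct p.1.1 A₀).2 a.1 = p.1.2 a
      have hc2 := congrFun (congrArg Prod.snd p.2.2) a.1
      refine hc2.trans ?_
      rw [liftT_snd, if_pos a.2]
      show (if h : B.1 a.1 = Sum.inr rρ then p.1.2 ⟨a.1, h⟩ else 1) = p.1.2 a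
      rw [dif_pos a.2]
  have e2 : {p : Wr G n × (Blk → G) // p.1 ∈ Y ∧ tabAct p.1 A₀ = liftT rσ rρ B (ext p.2)} ≃
      (g : Blk → G) × {y : Wr G n // y ∈ Y ∧ tabAct y A₀ = liftT rσ rρ B (ext g)} :=
    ⟨fun p => ⟨p.1.2, ⟨p.1.1, p.2⟩⟩, fun z => ⟨(z.2.1, z.1), z.2.2⟩,
      fun p => rfl, fun z => rfl⟩
  rw [Nat.card_congr (e1.trans e2), nat_card_sigma]
  have hconst : ∀ g : Blk → G,
      Nat.card {y : Wr G n // y ∈ Y ∧ tabAct y A₀ = liftT rσ rρ B (ext g)} = c :=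
    fun g => hY A₀ hA₀tab (liftT rσ rρ B (ext g)) (hBtab' g)
  rw [Finset.sum_congr rfl (fun g _ => hconst g), Finset.sum_const, smul_eq_mul]
  congr 1
  rw [Finset.card_univ, Fintype.card_fun, ← hBlkcard, Nat.card_eq_fintype_card]

lemma main (G : Type) [CommGroup G] [Fintype G] (n : ℕ) (α : Multiset ℕ) :
    ∀ σ ρ : Multiset ℕ, DPDom G n (σ + α) ρ σ (ρ + α) := by
  induction α using Multiset.induction with
  | empty => intro σ ρ Y h; simpa using h
  | cons x β ih =>
    intro σ ρ Y hY
    have hσeq : σ + (x ::ₘ β) = (x ::ₘ σ) + β := by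
      rw [← Multiset.singleton_add, ← Multiset.singleton_add]
      abel
    have h1 : DPTransitive G n (x ::ₘ σ) (ρ + β) Y := by
      apply ih (x ::ₘ σ) ρ Y
      rwa [hσeq] at hY
    have h2 := step G n σ (ρ + β) x Y h1
    have hρeq : ρ + (x ::ₘ β) = x ::ₘ (ρ + β) := by
      rw [← Multiset.singleton_add, ← Multiset.singleton_add]
      abel
    rwa [hρeq]

end UnionRuleAux


/-- **Union rule.**
Let `G` be a nontrivial finite abelian group and `(σ,ρ)` a double partition.  Then for
every integer partition `α`, `(σ ∪ α, ρ) ≽_G (σ, ρ ∪ α)`, both being double partitions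
of `n = |σ| + |ρ| + |α|`.  (The union of two partitions, i.e. the partition whose
multiset of parts is the union of the two multisets of parts, is the multiset sum.) -/
theorem union_rule (G : Type) [CommGroup G] [Fintype G] [Nontrivial G]
    (σ ρ α : Multiset ℕ) (hσ0 : 0 ∉ σ) (hρ0 : 0 ∉ ρ) (hα0 : 0 ∉ α) :
    DPDom G (σ.sum + ρ.sum + α.sum) (σ + α) ρ σ (ρ + α) :=
  UnionRuleAux.main G (σ.sum + ρ.sum + α.sum) α σ ρ
end

section
/- Let r ≥ 1 and n ≥ 1 be integers and, for 0 ≤ i ≤ n, let w_i = #{g ∈ C_r ≀ S_n : θ(g) = i}. Then for all nonnegative integers k and ℓ with k ≠ ℓ and k + ℓ ≤ n, Σ_{i=0}^{n} w_i · C_k^{(1/r)}(i) · C_ℓ^{(1/r)}(i) = 0. -/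
/-- `θ(w)`: the number of fixed points of `w` on `C_r × [n]`, divided by `r`. -/
noncomputable def theta {r n : ℕ} (w : Wr (Multiplicative (ZMod r)) n) : ℕ :=
  Nat.card {p : Multiplicative (ZMod r) × Fin n // wAct w p = p} / r

/-- The Charlier polynomial `C_k^{(a)}(x) = ∑_{j=0}^k (-1)^{k-j} binom(k,j) a^{-j} (x)_j`. -/
noncomputable def charlier (a : ℝ) (k : ℕ) (x : ℝ) : ℝ :=
  ∑ j ∈ Finset.range (k + 1),
    (-1 : ℝ) ^ (k - j) * (k.choose j : ℝ) * a⁻¹ ^ j * ∏ m ∈ Finset.range j, (x - m)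

/-- `Y` is a `t`-design in `C_r ≀ Sₙ`: it is transitive on `t`-tuples of elements of
`C_r × [n]` with pairwise distinct second coordinates. -/
def IsTDesign (r n t : ℕ) (Y : Set (Wr (Multiplicative (ZMod r)) n)) : Prop :=
  IsTransitiveOn (fun w v => fun s => wAct w (v s))
    {v : Fin t → Multiplicative (ZMod r) × Fin n | Function.Injective fun s => (v s).2} Y

/-- `Y` is a `d`-code in `C_r ≀ Sₙ` : `θ(x⁻¹y) ≤ n - d` for all distinct `x, y ∈ Y`. -/
def IsDCode (r n d : ℕ) (Y : Set (Wr (Multiplicative (ZMod r)) n)) : Prop :=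
  ∀ x ∈ Y, ∀ y ∈ Y, x ≠ y → (theta (x⁻¹ * y) : ℤ) ≤ (n : ℤ) - d



namespace CharlierAux
open Finset

noncomputable def D (j : ℕ) (x : ℝ) : ℝ := ∏ m ∈ Finset.range j, (x - m)

lemma D_nat (t j : ℕ) : D j (t : ℝ) = (t.descFactorial j : ℝ) := by
  induction j with
  | zero => simp [D]
  | succ j ih =>
    rcases lt_or_ge j t with h | h
    · rw [D, Finset.prod_range_succ, ← D, ih, Nat.descFactorial_succ]
      push_cast [Nat.cast_sub h.le]
      ring
    · rw [Nat.descFactorial_eq_zero_iff_lt.mpr (by omega), Nat.cast_zero, D]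
      apply Finset.prod_eq_zero (Finset.mem_range.mpr (show t < j + 1 by omega))
      simp

lemma D_succ_eq (j : ℕ) (x : ℝ) : D (j + 1) x = D j x * (x - j) := by
  rw [D, Finset.prod_range_succ]; rfl

lemma choose_cast_id (i m : ℕ) :
    (i.choose m : ℝ) * ((i : ℝ) - m) = (i.choose (m + 1) : ℝ) * (m + 1) := by
  rcases le_or_gt m i with h | h
  · have := Nat.choose_succ_right_eq i m
    have hcast : ((i.choose (m+1) * (m+1) : ℕ) : ℝ) = ((i.choose m * (i - m) : ℕ) : ℝ) := by
      rw [this]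
    push_cast [Nat.cast_sub h] at hcast
    linarith
  · rw [Nat.choose_eq_zero_of_lt h, Nat.choose_eq_zero_of_lt (by omega)]
    simp

lemma coeff_id (i j m : ℕ) :
    ((i.choose m : ℝ) * (j.choose m) * (m.factorial)) * ((i:ℝ) - m)
      = ((i.choose (m+1) : ℝ) * ((j+1).choose (m+1)) * ((m+1).factorial))
        - ((i.choose (m+1) : ℝ) * (j.choose (m+1)) * ((m+1).factorial)) := by
  have h1 := choose_cast_id i m
  have h2 : (((j+1).choose (m+1) : ℕ) : ℝ) = (j.choose m : ℝ) + (j.choose (m+1) : ℝ) := by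
    rw [Nat.choose_succ_succ]; push_cast; ring
  have h3 : ((m+1).factorial : ℝ) = (m+1) * (m.factorial) := by
    rw [Nat.factorial_succ]; push_cast; ring
  rw [h2, h3]
  linear_combination ((j.choose m : ℝ) * (m.factorial : ℝ)) * h1

lemma D_mul (i : ℕ) : ∀ (j : ℕ) (x : ℝ),
    D i x * D j x =
      ∑ m ∈ range (j + 1),
        ((i.choose m : ℝ) * (j.choose m) * (m.factorial)) * D (i + j - m) x := by
  intro j
  induction j with
  | zero => intro x; simp [D]
  | succ j ih =>
    intro x
    have step1 : ∀ m ∈ range (j + 1),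
        ((i.choose m : ℝ) * (j.choose m) * (m.factorial)) * D (i + j - m) x * (x - j)
          = ((i.choose m : ℝ) * (j.choose m) * (m.factorial)) * D (i + j + 1 - m) x
            + (((i.choose (m+1) : ℝ) * ((j+1).choose (m+1)) * ((m+1).factorial))
                - ((i.choose (m+1) : ℝ) * (j.choose (m+1)) * ((m+1).factorial))) * D (i + j - m) x := by
      intro m hm
      have hmj : m ≤ j := by simpa [Nat.lt_succ_iff] using hm
      have hx : x - j = (x - ((i + j - m : ℕ) : ℝ)) + ((i : ℝ) - m) := by
        rw [Nat.cast_sub (by omega)]; push_cast; ring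
      have hD : D (i + j + 1 - m) x = D (i + j - m) x * (x - ((i + j - m : ℕ) : ℝ)) := by
        have : i + j + 1 - m = (i + j - m) + 1 := by omega
        rw [this, D_succ_eq]
      rw [hD, ← coeff_id i j m, hx]; ring
    calc D i x * D (j + 1) x = (D i x * D j x) * (x - j) := by rw [D_succ_eq]; ring
    _ = ∑ m ∈ range (j + 1),
          ((i.choose m : ℝ) * (j.choose m) * (m.factorial)) * D (i + j - m) x * (x - j) := by
        rw [ih, Finset.sum_mul]
    _ = (∑ m ∈ range (j + 1),
          ((i.choose m : ℝ) * (j.choose m) * (m.factorial)) * D (i + j + 1 - m) x)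
        + ∑ m ∈ range (j + 1),
          (((i.choose (m+1) : ℝ) * ((j+1).choose (m+1)) * ((m+1).factorial))
            - ((i.choose (m+1) : ℝ) * (j.choose (m+1)) * ((m+1).factorial))) * D (i + j - m) x := by
        rw [Finset.sum_congr rfl step1, Finset.sum_add_distrib]
    _ = ∑ m ∈ range (j + 2),
          ((i.choose m : ℝ) * ((j+1).choose m) * (m.factorial)) * D (i + (j+1) - m) x := by
        have e1 : ∑ m ∈ range (j + 1),
            ((i.choose m : ℝ) * (j.choose m) * (m.factorial)) * D (i + j + 1 - m) x
            = ∑ m ∈ range (j + 2),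
              ((i.choose m : ℝ) * (j.choose m) * (m.factorial)) * D (i + j + 1 - m) x := by
          rw [Finset.sum_range_succ (n := j + 1), Nat.choose_succ_self]
          simp
        have e2 : ∑ m ∈ range (j + 2),
            (((i.choose m : ℝ) * ((j+1).choose m) * (m.factorial))
              - ((i.choose m : ℝ) * (j.choose m) * (m.factorial))) * D (i + j + 1 - m) x
            = ∑ m ∈ range (j + 1),
              (((i.choose (m+1) : ℝ) * ((j+1).choose (m+1)) * ((m+1).factorial))
                - ((i.choose (m+1) : ℝ) * (j.choose (m+1)) * ((m+1).factorial))) * D (i + j - m) x := by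
          rw [Finset.sum_range_succ' (fun m =>
            (((i.choose m : ℝ) * ((j+1).choose m) * (m.factorial))
              - ((i.choose m : ℝ) * (j.choose m) * (m.factorial))) * D (i + j + 1 - m) x)]
          simp only [Nat.choose_zero_right]
          have : ∀ m ∈ range (j+1), (((i.choose (m+1) : ℝ) * ((j+1).choose (m+1)) * ((m+1).factorial))
                - ((i.choose (m+1) : ℝ) * (j.choose (m+1)) * ((m+1).factorial))) * D (i + j + 1 - (m+1)) x
              = (((i.choose (m+1) : ℝ) * ((j+1).choose (m+1)) * ((m+1).factorial))
                - ((i.choose (m+1) : ℝ) * (j.choose (m+1)) * ((m+1).factorial))) * D (i + j - m) x := by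
            intro m hm
            congr 2
            omega
          rw [Finset.sum_congr rfl this]
          simp
        rw [e1, ← e2]
        rw [← Finset.sum_add_distrib]
        refine Finset.sum_congr rfl fun m hm => ?_
        have : i + (j + 1) - m = i + j + 1 - m := by omega
        rw [this]
        ring

lemma alt_sum (k m : ℕ) :
    ∑ i ∈ range (k + 1), (-1:ℝ)^(k-i) * (k.choose i) * (i.choose m)
      = if m = k then 1 else 0 := by
  rcases lt_or_ge k m with h | h
  · rw [if_neg (by omega)]
    apply Finset.sum_eq_zero
    intro i hi
    have hi' : i < m := by simp at hi; omega
    rw [Nat.choose_eq_zero_of_lt hi']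
    ring
  · -- m ≤ k : restrict to i ≥ m
    have hzero : ∀ i ∈ range (k+1), i < m → (-1:ℝ)^(k-i) * (k.choose i) * (i.choose m) = 0 := by
      intro i _ hi
      rw [Nat.choose_eq_zero_of_lt hi]; ring
    -- use the trinomial identity and alternating sum
    have key : ∑ i ∈ range (k + 1), (-1:ℝ)^(k-i) * (k.choose i) * (i.choose m)
        = (k.choose m : ℝ) * ∑ t ∈ range (k - m + 1), (-1:ℝ)^(k-m-t) * ((k-m).choose t) := by
      rw [Finset.mul_sum]
      rw [← Finset.sum_range_add_sum_Ico _ (show m ≤ k + 1 by omega)]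
      rw [Finset.sum_eq_zero (fun i hi => hzero i (by simp at hi ⊢; omega) (by simp at hi; omega)),
        zero_add]
      rw [show k + 1 = m + (k - m + 1) by omega]
      rw [Finset.sum_Ico_eq_sum_range]
      refine Finset.sum_congr (by congr 1; omega) fun t ht => ?_
      have htk : t ≤ k - m := by simp at ht; omega
      have h1 : k.choose (m + t) * (m + t).choose m = k.choose m * (k - m).choose t := by
        have := Nat.choose_mul (n := k) (k := m + t) (s := m) (show m ≤ m + t by omega)
        simpa using this
      have h2 : ((k.choose (m+t) * (m+t).choose m : ℕ) : ℝ) = ((k.choose m * (k-m).choose t : ℕ) : ℝ) := by rw [h1]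
      push_cast at h2
      have h3 : k - (m + t) = k - m - t := by omega
      rw [h3]
      linear_combination ((-1:ℝ)^(k-m-t)) * h2
    rw [key]
    have flip : ∀ t ∈ range (k - m + 1), (-1:ℝ)^(k-m-t) * ((k-m).choose t)
        = (-1:ℝ)^(k-m) * ((-1:ℝ)^t * ((k-m).choose t)) := by
      intro t ht
      have htk : t ≤ k - m := by simp at ht; omega
      have hkm : (-1:ℝ)^(k-m) = (-1:ℝ)^(k-m-t) * (-1:ℝ)^t := by
        rw [← pow_add]; congr 1; omega
      have hb : (-1:ℝ)^t * (-1:ℝ)^t = 1 := by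
        rw [← pow_add, ← two_mul, pow_mul]; norm_num
      rw [hkm]
      linear_combination (-(( -1:ℝ)^(k-m-t) * (((k-m).choose t : ℕ) : ℝ))) * hb
    rw [Finset.sum_congr rfl flip, ← Finset.mul_sum]
    have halt : ∑ t ∈ range (k - m + 1), (-1:ℝ)^t * ((k-m).choose t)
        = if k - m = 0 then 1 else 0 := by
      have := Int.alternating_sum_range_choose (n := k - m)
      have hc : ((∑ t ∈ range (k - m + 1), ((-1)^t * ((k-m).choose t) : ℤ) : ℤ) : ℝ)
          = ((if k - m = 0 then 1 else 0 : ℤ) : ℝ) := by rw [this]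
      push_cast at hc
      convert hc using 2 <;> simp
    rw [halt]
    rcases eq_or_lt_of_le h with he | hlt
    · subst he
      simp
    · rw [if_neg (by omega), if_neg (by omega)]
      ring


lemma final0 (n k ℓ : ℕ) (R : ℝ) (hkl : k ≠ ℓ) (hsum : k + ℓ ≤ n) :
    ∑ i ∈ range (k+1), ∑ j ∈ range (ℓ+1),
      (((-1:ℝ)^(k-i) * (k.choose i) * R^i) * ((-1:ℝ)^(ℓ-j) * (ℓ.choose j) * R^j)) *
      (∑ m ∈ range (j+1), ((i.choose m : ℝ) * (j.choose m) * (m.factorial)) *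
        ((n.factorial : ℝ) * R^(n-(i+j-m)))) = 0 := by
  have step1 : ∀ i ∈ range (k+1), ∀ j ∈ range (ℓ+1),
      (((-1:ℝ)^(k-i) * (k.choose i) * R^i) * ((-1:ℝ)^(ℓ-j) * (ℓ.choose j) * R^j)) *
      (∑ m ∈ range (j+1), ((i.choose m : ℝ) * (j.choose m) * (m.factorial)) *
        ((n.factorial : ℝ) * R^(n-(i+j-m))))
      = ∑ m ∈ range (ℓ+1),
          ((-1:ℝ)^(k-i) * (k.choose i) * (i.choose m)) *
          (((-1:ℝ)^(ℓ-j) * (ℓ.choose j) * (j.choose m)) *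
          ((m.factorial : ℝ) * (n.factorial : ℝ) * R^(n+m))) := by
    intro i hi j hj
    rw [Finset.mul_sum]
    rw [Finset.sum_subset (Finset.range_subset_range.mpr
        (Nat.succ_le_succ (Nat.lt_succ_iff.mp (Finset.mem_range.mp hj))))
      (by
        intro m hm hmn
        have : j < m := by simp at hm hmn ⊢; omega
        rw [Nat.choose_eq_zero_of_lt this]
        push_cast
        ring)]
    refine Finset.sum_congr rfl fun m hm => ?_
    rcases le_or_gt m j with hmj | hmj
    · have hij : i ≤ k := by simp at hi; omega
      have hjl : j ≤ ℓ := by simp at hj; omega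
      have hRs : R^i * R^j * R^(n-(i+j-m)) = R^(n+m) := by
        rw [← pow_add, ← pow_add]
        congr 1
        omega
      have expand : (((-1:ℝ)^(k-i) * (k.choose i) * R^i) * ((-1:ℝ)^(ℓ-j) * (ℓ.choose j) * R^j)) *
          (((i.choose m : ℝ) * (j.choose m) * (m.factorial)) * ((n.factorial : ℝ) * R^(n-(i+j-m))))
          = ((-1:ℝ)^(k-i) * (k.choose i) * (i.choose m)) *
            (((-1:ℝ)^(ℓ-j) * (ℓ.choose j) * (j.choose m)) *
            ((m.factorial : ℝ) * (n.factorial : ℝ) * (R^i * R^j * R^(n-(i+j-m))))) := by ring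
      rw [expand, hRs]
    · rw [Nat.choose_eq_zero_of_lt hmj]
      push_cast
      ring
  rw [Finset.sum_congr rfl (fun i hi => Finset.sum_congr rfl (fun j hj => step1 i hi j hj))]
  rw [Finset.sum_comm]
  have swap2 : ∀ j ∈ range (ℓ+1), ∑ i ∈ range (k+1), ∑ m ∈ range (ℓ+1),
      ((-1:ℝ)^(k-i) * (k.choose i) * (i.choose m)) *
      (((-1:ℝ)^(ℓ-j) * (ℓ.choose j) * (j.choose m)) *
      ((m.factorial : ℝ) * (n.factorial : ℝ) * R^(n+m)))
      = ∑ m ∈ range (ℓ+1), (if m = k then (1:ℝ) else 0) *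
          (((-1:ℝ)^(ℓ-j) * (ℓ.choose j) * (j.choose m)) *
          ((m.factorial : ℝ) * (n.factorial : ℝ) * R^(n+m))) := by
    intro j _
    rw [Finset.sum_comm]
    refine Finset.sum_congr rfl fun m _ => ?_
    rw [← Finset.sum_mul, alt_sum]
  rw [Finset.sum_congr rfl swap2]
  rw [Finset.sum_comm]
  apply Finset.sum_eq_zero
  intro m _
  rcases eq_or_ne m k with rfl | hmk
  · simp only [eq_self_iff_true, if_true, one_mul]
    rw [show (∑ j ∈ range (ℓ+1), ((-1:ℝ)^(ℓ-j) * (ℓ.choose j) * (j.choose m)) *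
        ((m.factorial : ℝ) * (n.factorial : ℝ) * R^(n+m)))
        = (∑ j ∈ range (ℓ+1), ((-1:ℝ)^(ℓ-j) * (ℓ.choose j) * (j.choose m))) *
        ((m.factorial : ℝ) * (n.factorial : ℝ) * R^(n+m)) from (Finset.sum_mul _ _ _).symm]
    rw [alt_sum ℓ m, if_neg (fun h : m = ℓ => hkl (by omega))]
    ring
  · apply Finset.sum_eq_zero
    intro j _
    rw [if_neg hmk]
    ring


variable {G : Type*} [CommGroup G] {n : ℕ}

def wrEquiv (G : Type*) [CommGroup G] (n : ℕ) :
    Wr G n ≃ (Fin n → G) × Equiv.Perm (Fin n) where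
  toFun g := (g.left, g.right)
  invFun p := ⟨p.1, p.2⟩
  left_inv g := rfl
  right_inv p := rfl

noncomputable instance instFintypeWr [Fintype G] : Fintype (Wr G n) :=
  Fintype.ofEquiv _ (wrEquiv G n).symm

section ThetaCount

variable {r n : ℕ}

local notation "M" => Multiplicative (ZMod r)

/-- fixed points of the action correspond to colour-1 fixed points of the permutation -/
lemma wAct_fix_iff (g : Wr M n) (p : M × Fin n) :
    wAct g p = p ↔ (g.right p.2 = p.2 ∧ g.left p.2 = 1) := by
  constructor
  · intro h
    have h2 : g.right p.2 = p.2 := congrArg Prod.snd h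
    have h1 : p.1 * g.left (g.right p.2) = p.1 := congrArg Prod.fst h
    rw [h2] at h1
    exact ⟨h2, mul_eq_left.mp h1⟩
  · rintro ⟨h2, h1⟩
    show (p.1 * g.left (g.right p.2), g.right p.2) = p
    rw [h2, h1, mul_one]

lemma theta_eq (hr : 1 ≤ r) (g : Wr M n) :
    theta g = Nat.card {i : Fin n // g.right i = i ∧ g.left i = 1} := by
  haveI : NeZero r := ⟨by omega⟩
  have e : {p : M × Fin n // wAct g p = p} ≃
      M × {i : Fin n // g.right i = i ∧ g.left i = 1} := by
    refine (Equiv.subtypeEquivRight (fun p => wAct_fix_iff g p)).trans ?_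
    exact {
      toFun := fun p => (p.1.1, ⟨p.1.2, p.2⟩)
      invFun := fun q => ⟨(q.1, q.2.1), q.2.2⟩
      left_inv := fun p => rfl
      right_inv := fun q => rfl }
  rw [theta, Nat.card_congr e, Nat.card_prod]
  have : Nat.card M = r := by
    rw [Nat.card_congr (MulEquiv.toEquiv (MulEquiv.refl _))]
    exact Nat.card_zmod r
  rw [this, Nat.mul_div_cancel_left _ (by omega : 0 < r)]

lemma theta_le (hr : 1 ≤ r) (g : Wr M n) : theta g ≤ n := by
  rw [theta_eq hr g, Nat.card_eq_fintype_card]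
  calc Fintype.card {i : Fin n // g.right i = i ∧ g.left i = 1}
      ≤ Fintype.card (Fin n) := Fintype.card_subtype_le _
    _ = n := Fintype.card_fin n

end ThetaCount


section Counting
open Function
variable {r n : ℕ} [NeZero r]

local notation "M" => Multiplicative (ZMod r)

lemma card_M : Nat.card M = r := Nat.card_zmod r

lemma stab_card {j : ℕ} (hj : j ≤ n) (v : Fin j ↪ Fin n) :
    Nat.card {g : Wr M n // ∀ s, g.right (v s) = v s ∧ g.left (v s) = 1}
      = (n - j).factorial * r ^ (n - j) := by
  classical
  have e1 : {g : Wr M n // ∀ s, g.right (v s) = v s ∧ g.left (v s) = 1} ≃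
      ({π : Equiv.Perm (Fin n) // ∀ s, π (v s) = v s} ×
       {f : Fin n → M // ∀ s, f (v s) = 1}) :=
    { toFun := fun g => (⟨g.1.right, fun s => (g.2 s).1⟩, ⟨g.1.left, fun s => (g.2 s).2⟩)
      invFun := fun p => ⟨⟨p.2.1, p.1.1⟩, fun s => ⟨p.1.2 s, p.2.2 s⟩⟩
      left_inv := fun g => rfl
      right_inv := fun p => rfl }
  rw [Nat.card_congr e1, Nat.card_prod]
  have hrangecard : Fintype.card {a : Fin n // a ∈ Set.range ⇑v} = j := by
    have := Set.card_range_of_injective v.injective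
    rw [Fintype.card_fin] at this
    convert this using 2
  have hcompl : Fintype.card {a : Fin n // a ∉ Set.range ⇑v} = n - j := by
    rw [Fintype.card_subtype_compl, hrangecard, Fintype.card_fin]
  have hperm : Nat.card {π : Equiv.Perm (Fin n) // ∀ s, π (v s) = v s}
      = (n - j).factorial := by
    have cond : ∀ π : Equiv.Perm (Fin n),
        (∀ a, ¬(a ∉ Set.range ⇑v) → π a = a) ↔ (∀ s, π (v s) = v s) := by
      intro π
      constructor
      · intro h s
        exact h (v s) (by simp)
      · rintro h a ha
        rcases not_not.mp ha with ⟨s, rfl⟩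
        exact h s
    have e2 : Equiv.Perm {a : Fin n // a ∉ Set.range ⇑v} ≃
        {π : Equiv.Perm (Fin n) // ∀ s, π (v s) = v s} :=
      (Equiv.Perm.subtypeEquivSubtypePerm (fun a => a ∉ Set.range ⇑v)).trans
        (Equiv.subtypeEquivRight cond)
    rw [← Nat.card_congr e2, Nat.card_eq_fintype_card, Fintype.card_perm, hcompl]
  have hfun : Nat.card {f : Fin n → M // ∀ s, f (v s) = 1} = r ^ (n - j) := by
    have cond : ∀ f : Fin n → M,
        (∀ s, f (v s) = 1) ↔ (f ∘ Subtype.val = fun _ : {a : Fin n // a ∈ Set.range ⇑v} => (1 : M)) := by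
      intro f
      rw [funext_iff]
      constructor
      · rintro h ⟨a, s, rfl⟩
        exact h s
      · intro h s
        exact h ⟨v s, s, rfl⟩
    have e3 : {f : Fin n → M // ∀ s, f (v s) = 1} ≃
        ({a : Fin n // ¬ a ∈ Set.range ⇑v} → M) :=
      (Equiv.subtypeEquivRight cond).trans
        (Equiv.subtypePreimage (fun a : Fin n => a ∈ Set.range ⇑v) (fun _ => (1 : M)))
    rw [Nat.card_congr e3, Nat.card_fun, card_M, Nat.card_eq_fintype_card, hcompl]
  rw [hperm, hfun]

end Counting

section Moments
variable {r n : ℕ} [NeZero r]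
local notation "M" => Multiplicative (ZMod r)

lemma momsum {j : ℕ} (hj : j ≤ n) :
    ∑ g : Wr M n, (theta g).descFactorial j = n.factorial * r ^ (n - j) := by
  classical
  have hr : 1 ≤ r := Nat.one_le_iff_ne_zero.mpr (NeZero.ne r)
  have stepA : ∀ g : Wr M n, (theta g).descFactorial j =
      (Finset.univ.filter (fun v : Fin j ↪ Fin n =>
        ∀ s, g.right (v s) = v s ∧ g.left (v s) = 1)).card := by
    intro g
    have E : (Fin j ↪ {i : Fin n // g.right i = i ∧ g.left i = 1}) ≃
        {v : Fin j ↪ Fin n // ∀ s, g.right (v s) = v s ∧ g.left (v s) = 1} :=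
      { toFun := fun u => ⟨⟨fun s => (u s).1, fun a b h => u.injective (Subtype.ext h)⟩,
          fun s => (u s).2⟩
        invFun := fun w => ⟨fun s => ⟨w.1 s, w.2 s⟩,
          fun a b h => w.1.injective (congrArg Subtype.val h)⟩
        left_inv := fun u => by ext s; rfl
        right_inv := fun w => by ext s; rfl }
    have h1 : (theta g).descFactorial j =
        Fintype.card (Fin j ↪ {i : Fin n // g.right i = i ∧ g.left i = 1}) := by
      rw [Fintype.card_embedding_eq, Fintype.card_fin, theta_eq hr g,
        Nat.card_eq_fintype_card]
    rw [h1, Fintype.card_congr E, Fintype.card_subtype]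
  calc ∑ g : Wr M n, (theta g).descFactorial j
      = ∑ g : Wr M n, ∑ v : Fin j ↪ Fin n,
          if (∀ s, g.right (v s) = v s ∧ g.left (v s) = 1) then 1 else 0 := by
        refine Finset.sum_congr rfl fun g _ => ?_
        rw [stepA g, Finset.card_filter]
    _ = ∑ v : Fin j ↪ Fin n, ∑ g : Wr M n,
          if (∀ s, g.right (v s) = v s ∧ g.left (v s) = 1) then 1 else 0 :=
        Finset.sum_comm
    _ = ∑ _v : Fin j ↪ Fin n, (n - j).factorial * r ^ (n - j) := by
        refine Finset.sum_congr rfl fun v _ => ?_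
        rw [← Finset.card_filter, ← Fintype.card_subtype, ← Nat.card_eq_fintype_card,
          stab_card hj v]
    _ = n.factorial * r ^ (n - j) := by
        rw [Finset.sum_const, smul_eq_mul, Finset.card_univ, Fintype.card_embedding_eq,
          Fintype.card_fin, Fintype.card_fin]
        rw [Nat.descFactorial_eq_factorial_mul_choose, ← Nat.mul_assoc]
        congr 1
        rw [Nat.mul_comm (j.factorial) (n.choose j)]
        exact Nat.choose_mul_factorial_mul_factorial hj
end Moments

section Fiber
variable {W : Type*} [Fintype W]

lemma sum_fiber (n : ℕ) (th : W → ℕ) (hth : ∀ g, th g ≤ n) (F : ℕ → ℝ) :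
    ∑ i ∈ range (n+1), (Nat.card {g : W // th g = i} : ℝ) * F i
      = ∑ g : W, F (th g) := by
  classical
  rw [← Finset.sum_fiberwise_of_maps_to
    (fun g _ => Finset.mem_range.mpr (Nat.lt_succ_of_le (hth g)))
    (fun g => F (th g))]
  refine Finset.sum_congr rfl fun i _ => ?_
  rw [Finset.sum_congr rfl (fun g hg => by rw [(Finset.mem_filter.mp hg).2]),
    Finset.sum_const, Nat.card_eq_fintype_card, Fintype.card_subtype]
  simp [mul_comm]

end Fiber

section MomR
variable {r n : ℕ} [NeZero r]
local notation "M" => Multiplicative (ZMod r)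

lemma momsumR {s : ℕ} (hs : s ≤ n) :
    ∑ g : Wr M n, D s ((theta g : ℕ) : ℝ) = (n.factorial : ℝ) * (r : ℝ)^(n-s) := by
  rw [Finset.sum_congr rfl (fun g _ => D_nat (theta g) s), ← Nat.cast_sum,
    momsum hs]
  push_cast
  ring

end MomR

section Key
variable {r n : ℕ} [NeZero r]
local notation "M" => Multiplicative (ZMod r)

lemma key (k ℓ : ℕ) (hkl : k ≠ ℓ) (hsum : k + ℓ ≤ n) :
    ∑ g : Wr M n, charlier (1/(r:ℝ)) k ((theta g : ℕ) : ℝ) *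
      charlier (1/(r:ℝ)) ℓ ((theta g : ℕ) : ℝ) = 0 := by
  classical
  have hRinv : ((1:ℝ)/(r:ℕ))⁻¹ = (r:ℝ) := by rw [one_div, inv_inv]
  have hch : ∀ (k' t : ℕ), charlier (1/(r:ℝ)) k' (t:ℝ) =
      ∑ j ∈ range (k'+1), ((-1:ℝ)^(k'-j) * (k'.choose j) * (r:ℝ)^j) * D j (t:ℝ) := by
    intro k' t
    unfold charlier D
    refine Finset.sum_congr rfl fun j _ => ?_
    rw [hRinv]
  have inner : ∀ i ∈ range (k+1), ∀ j ∈ range (ℓ+1),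
      ∑ g : Wr M n, D i ((theta g:ℕ):ℝ) * D j ((theta g:ℕ):ℝ)
      = ∑ m ∈ range (j+1), ((i.choose m : ℝ) * (j.choose m) * (m.factorial)) *
          ((n.factorial : ℝ) * (r:ℝ)^(n-(i+j-m))) := by
    intro i hi j hj
    rw [Finset.sum_congr rfl (fun g _ => D_mul i j ((theta g : ℕ):ℝ))]
    rw [Finset.sum_comm]
    refine Finset.sum_congr rfl fun m hm => ?_
    rw [← Finset.mul_sum]
    rw [momsumR (show i+j-m ≤ n by simp at hi hj; omega)]
  calc ∑ g : Wr M n, charlier (1/(r:ℝ)) k ((theta g : ℕ) : ℝ) *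
        charlier (1/(r:ℝ)) ℓ ((theta g : ℕ):ℝ)
      = ∑ g : Wr M n, ∑ i ∈ range (k+1), ∑ j ∈ range (ℓ+1),
          (((-1:ℝ)^(k-i) * (k.choose i) * (r:ℝ)^i) * D i ((theta g:ℕ):ℝ)) *
          (((-1:ℝ)^(ℓ-j) * (ℓ.choose j) * (r:ℝ)^j) * D j ((theta g:ℕ):ℝ)) := by
        refine Finset.sum_congr rfl fun g _ => ?_
        rw [hch k (theta g), hch ℓ (theta g), Finset.sum_mul_sum]
    _ = ∑ i ∈ range (k+1), ∑ j ∈ range (ℓ+1),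
          (((-1:ℝ)^(k-i) * (k.choose i) * (r:ℝ)^i) * ((-1:ℝ)^(ℓ-j) * (ℓ.choose j) * (r:ℝ)^j)) *
          ∑ g : Wr M n, D i ((theta g:ℕ):ℝ) * D j ((theta g:ℕ):ℝ) := by
        rw [Finset.sum_comm]
        refine Finset.sum_congr rfl fun i _ => ?_
        rw [Finset.sum_comm]
        refine Finset.sum_congr rfl fun j _ => ?_
        rw [Finset.mul_sum]
        refine Finset.sum_congr rfl fun g _ => ?_
        ring
    _ = ∑ i ∈ range (k+1), ∑ j ∈ range (ℓ+1),
          (((-1:ℝ)^(k-i) * (k.choose i) * (r:ℝ)^i) * ((-1:ℝ)^(ℓ-j) * (ℓ.choose j) * (r:ℝ)^j)) *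
          ∑ m ∈ range (j+1), ((i.choose m : ℝ) * (j.choose m) * (m.factorial)) *
            ((n.factorial : ℝ) * (r:ℝ)^(n-(i+j-m))) := by
        refine Finset.sum_congr rfl fun i hi => Finset.sum_congr rfl fun j hj => ?_
        rw [inner i hi j hj]
    _ = 0 := final0 n k ℓ (r:ℝ) hkl hsum

end Key

end CharlierAux
/-- **Orthogonality of Charlier polynomials w.r.t. the fixed-point distribution.**
Let `r, n ≥ 1` and, for `0 ≤ i ≤ n`, let `wᵢ` be the number of elements `g` of
`C_r ≀ Sₙ` with `θ(g) = i`.  Then for all `k ≠ ℓ` with `k + ℓ ≤ n`,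
`∑_{i=0}^n wᵢ C_k^{(1/r)}(i) C_ℓ^{(1/r)}(i) = 0`. -/
theorem charlier_orthogonality (r n : ℕ) (hr : 1 ≤ r) (hn : 1 ≤ n)
    (k ℓ : ℕ) (hkl : k ≠ ℓ) (hsum : k + ℓ ≤ n) :
    ∑ i ∈ Finset.range (n + 1),
      (Nat.card {g : Wr (Multiplicative (ZMod r)) n // theta g = i} : ℝ) *
        charlier (1 / r) k i * charlier (1 / r) ℓ i = 0 := by
  classical
  haveI : NeZero r := ⟨by omega⟩
  have hassoc : ∑ i ∈ Finset.range (n + 1),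
      (Nat.card {g : Wr (Multiplicative (ZMod r)) n // theta g = i} : ℝ) *
        charlier (1 / r) k i * charlier (1 / r) ℓ i
      = ∑ i ∈ Finset.range (n + 1),
      (Nat.card {g : Wr (Multiplicative (ZMod r)) n // theta g = i} : ℝ) *
        (charlier (1 / r) k i * charlier (1 / r) ℓ i) :=
    Finset.sum_congr rfl fun i _ => by ring
  rw [hassoc,
    CharlierAux.sum_fiber n theta (fun g => CharlierAux.theta_le hr g)
      (fun t : ℕ => charlier (1 / r) k t * charlier (1 / r) ℓ t)]
  exact CharlierAux.key k ℓ hkl hsum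
end

section
/- Let r ≥ 1 and n ≥ 1 be integers, let Y be a nonempty subset of C_r ≀ S_n with dual distance distribution (A'_0,…,A'_n), and let t be an integer with 1 ≤ t ≤ n. If Y is a t-design, then A'_k = 0 for all k with 1 ≤ k ≤ t. Moreover, if t ≤ n/2 and A'_k = 0 for all k with 1 ≤ k ≤ t, then Y is a t-design. -/
/-! ### Auxiliary lemmas -/

section Part1
variable {G : Type*} [CommGroup G] {n : ℕ}

lemma wAct_one (p : G × Fin n) : wAct 1 p = p := by
  simp [wAct, permMulAut]

lemma wAct_mul (x y : Wr G n) (p : G × Fin n) : wAct (x * y) p = wAct x (wAct y p) := by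
  simp only [wAct, SemidirectProduct.mul_left, SemidirectProduct.mul_right, permMulAut,
    MulEquiv.arrowCongr_apply, MonoidHom.coe_mk, OneHom.coe_mk, Pi.mul_apply,
    Equiv.Perm.mul_apply, Function.comp, Equiv.symm_apply_apply, MulEquiv.refl_apply]
  ext
  · show p.1 * (x.left _ * y.left _) = p.1 * y.left _ * x.left _
    rw [mul_comm (x.left _), ← mul_assoc]
  · rfl

lemma wAct_inv_act (x : Wr G n) (p : G × Fin n) : wAct x⁻¹ (wAct x p) = p := by
  rw [← wAct_mul, inv_mul_cancel, wAct_one]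

lemma wAct_injective (x : Wr G n) : Function.Injective (wAct x) := by
  intro p q h
  have := congrArg (wAct x⁻¹) h
  rwa [wAct_inv_act, wAct_inv_act] at this

lemma wAct_fix_iff (w : Wr G n) (p : G × Fin n) :
    wAct w p = p ↔ w.right p.2 = p.2 ∧ w.left p.2 = 1 := by
  constructor
  · intro h
    have h2 : w.right p.2 = p.2 := congrArg Prod.snd h
    refine ⟨h2, ?_⟩
    have h1 : p.1 * w.left (w.right p.2) = p.1 := congrArg Prod.fst h
    rw [h2] at h1
    exact (mul_left_cancel (a := p.1) (by rw [h1, mul_one]) : w.left p.2 = 1).symm ▸ rfl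
  · rintro ⟨h2, h1⟩
    unfold wAct
    rw [h2, h1, mul_one]

end Part1

section Part2
variable {r n : ℕ} [NeZero r]

/-- fixed positions of a wreath product element -/
noncomputable def fixedPos (w : Wr (Multiplicative (ZMod r)) n) : Finset (Fin n) :=
  @Finset.filter _ (fun i => w.right i = i ∧ w.left i = 1) (Classical.decPred _) Finset.univ

lemma theta_eq (w : Wr (Multiplicative (ZMod r)) n) : theta w = (fixedPos w).card := by
  classical
  have e : {p : Multiplicative (ZMod r) × Fin n // wAct w p = p} ≃
      Multiplicative (ZMod r) × {i : Fin n // w.right i = i ∧ w.left i = 1} :=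
    { toFun := fun p => (p.1.1, ⟨p.1.2, (wAct_fix_iff w p.1).mp p.2⟩)
      invFun := fun q => ⟨(q.1, q.2.1), (wAct_fix_iff w (q.1, q.2.1)).mpr q.2.2⟩
      left_inv := fun p => by ext <;> rfl
      right_inv := fun q => by ext <;> rfl }
  have hc : Nat.card {p : Multiplicative (ZMod r) × Fin n // wAct w p = p} =
      r * (fixedPos w).card := by
    rw [Nat.card_congr e, Nat.card_prod]
    congr 1
    · rw [Nat.card_eq_fintype_card]
      rw [Fintype.card_multiplicative]; exact ZMod.card r
    · rw [Nat.card_eq_fintype_card, Fintype.card_subtype]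
      congr
  rw [theta, hc, Nat.mul_div_cancel_left _ (Nat.pos_of_ne_zero (NeZero.ne r))]

end Part2

section Part3
open Finset
variable {r n : ℕ} [NeZero r]

local notation "Om" => (Multiplicative (ZMod r) × Fin n)
local notation "W" => Wr (Multiplicative (ZMod r)) n

/-- tuples action -/
def actT (t : ℕ) (w : Wr (Multiplicative (ZMod r)) n) (v : Fin t → Om) : Fin t → Om :=
  fun s => wAct w (v s)

/-- injective-positions tuples -/
noncomputable def St (r n t : ℕ) [NeZero r] : Finset (Fin t → Multiplicative (ZMod r) × Fin n) :=
  @Finset.filter _ (fun v => Function.Injective fun s => (v s).2) (Classical.decPred _)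
    Finset.univ

lemma mem_St {t : ℕ} {v : Fin t → Om} :
    v ∈ St r n t ↔ Function.Injective fun s => (v s).2 := by
  simp [St]

lemma actT_mem_St {t : ℕ} (w : W) {v : Fin t → Om} (hv : v ∈ St r n t) :
    actT t w v ∈ St r n t := by
  rw [mem_St] at hv ⊢
  intro s s' h
  exact hv (w.right.injective h)

/-- the counting function N(a,b) -/
noncomputable def Ncnt (Y : Finset (Wr (Multiplicative (ZMod r)) n)) (t : ℕ)
    (a b : Fin t → Multiplicative (ZMod r) × Fin n) : ℕ :=
  (@Finset.filter _ (fun y => actT t y a = b) (Classical.decPred _) Y).card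

lemma sum_Ncnt (Y : Finset (Wr (Multiplicative (ZMod r)) n)) {t : ℕ} {a : Fin t → Om}
    (ha : a ∈ St r n t) : ∑ b ∈ St r n t, Ncnt Y t a b = Y.card := by
  classical
  rw [Finset.card_eq_sum_card_fiberwise (f := fun y => actT t y a) (t := St r n t)
    (fun y _ => actT_mem_St y ha)]
  refine Finset.sum_congr rfl fun b _ => ?_
  unfold Ncnt; congr

/-- number of fixed injective tuples -/
noncomputable def FixCnt (r n : ℕ) [NeZero r] (t : ℕ) (w : Wr (Multiplicative (ZMod r)) n) : ℕ :=
  (@Finset.filter _ (fun v => actT t w v = v) (Classical.decPred _) (St r n t)).card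

lemma fixcnt_eq (t : ℕ) (w : W) :
    FixCnt r n t w = r ^ t * (theta w).descFactorial t := by
  classical
  have e : {v : Fin t → Om // v ∈ St r n t ∧ actT t w v = v} ≃
      (Fin t → Multiplicative (ZMod r)) ×
        (Fin t ↪ {i : Fin n // w.right i = i ∧ w.left i = 1}) :=
    { toFun := fun v =>
        (fun s => (v.1 s).1,
         ⟨fun s => ⟨(v.1 s).2, (wAct_fix_iff w (v.1 s)).mp (congrFun v.2.2 s)⟩,
          fun s s' h => (mem_St.mp v.2.1) (congrArg Subtype.val h)⟩)
      invFun := fun q =>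
        ⟨fun s => (q.1 s, (q.2 s).1),
         ⟨mem_St.mpr (fun s s' h => q.2.injective (Subtype.ext h)),
          funext fun s => (wAct_fix_iff w _).mpr (q.2 s).2⟩⟩
      left_inv := fun v => by ext s <;> rfl
      right_inv := fun q => by
        ext s
        · rfl
        · rfl }
  have h1 : FixCnt r n t w = Nat.card {v : Fin t → Om // v ∈ St r n t ∧ actT t w v = v} := by
    rw [FixCnt, ← Nat.card_eq_finsetCard]
    exact Nat.card_congr (Equiv.subtypeEquivRight fun v =>
      @Finset.mem_filter _ _ (Classical.decPred _) _ v)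
  rw [h1, Nat.card_congr e, Nat.card_prod, Nat.card_eq_fintype_card, Nat.card_eq_fintype_card,
    Fintype.card_embedding_eq, Fintype.card_fun, Fintype.card_multiplicative, ZMod.card,
    Fintype.card_fin]
  congr 1
  rw [theta_eq, Fintype.card_subtype]
  congr
end Part3

section Part4
open Finset
variable {r n : ℕ} [NeZero r]

local notation "Om" => (Multiplicative (ZMod r) × Fin n)
local notation "W" => Wr (Multiplicative (ZMod r)) n

lemma actT_mul (t : ℕ) (u v : W) (a : Fin t → Om) :
    actT t (u * v) a = actT t u (actT t v a) := by
  funext s; exact wAct_mul u v (a s)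

lemma fix_iff_act_eq {t : ℕ} (x y : W) (a : Fin t → Om) :
    actT t (x⁻¹ * y) a = a ↔ actT t y a = actT t x a := by
  constructor
  · intro h
    have := congrArg (actT t x) h
    rwa [← actT_mul, mul_inv_cancel_left] at this
  · intro h
    rw [actT_mul, h, ← actT_mul, inv_mul_cancel]
    funext s; exact wAct_one (a s)

lemma Ncnt_eq_sum (Y : Finset W) (t : ℕ) (a b : Fin t → Om) :
    Ncnt Y t a b = ∑ y ∈ Y, if actT t y a = b then (1:ℕ) else 0 := by
  classical
  rw [Ncnt, Finset.filter_congr_decidable, Finset.card_filter]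

lemma FixCnt_eq_sum (t : ℕ) (w : W) :
    FixCnt r n t w = ∑ a ∈ St r n t, if actT t w a = a then (1:ℕ) else 0 := by
  classical
  rw [FixCnt, Finset.filter_congr_decidable, Finset.card_filter]

/-- The master identity. -/
lemma sumFix_eq (Y : Finset W) (t : ℕ) :
    ∑ x ∈ Y, ∑ y ∈ Y, FixCnt r n t (x⁻¹ * y) =
    ∑ a ∈ St r n t, ∑ b ∈ St r n t, (Ncnt Y t a b) ^ 2 := by
  classical
  have step1 : ∀ x ∈ Y, ∀ y ∈ Y, FixCnt r n t (x⁻¹ * y) =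
      ∑ a ∈ St r n t, if actT t y a = actT t x a then (1:ℕ) else 0 := by
    intro x _ y _
    rw [FixCnt_eq_sum]
    exact Finset.sum_congr rfl fun a _ => by rw [if_congr (fix_iff_act_eq x y a) rfl rfl]
  calc ∑ x ∈ Y, ∑ y ∈ Y, FixCnt r n t (x⁻¹ * y)
      = ∑ x ∈ Y, ∑ y ∈ Y, ∑ a ∈ St r n t, if actT t y a = actT t x a then (1:ℕ) else 0 := by
        refine Finset.sum_congr rfl fun x hx => Finset.sum_congr rfl fun y hy => ?_
        exact step1 x hx y hy
    _ = ∑ a ∈ St r n t, ∑ x ∈ Y, ∑ y ∈ Y, if actT t y a = actT t x a then (1:ℕ) else 0 := by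
        have h1 : ∀ x ∈ Y, (∑ y ∈ Y, ∑ a ∈ St r n t,
            if actT t y a = actT t x a then (1:ℕ) else 0) =
            ∑ a ∈ St r n t, ∑ y ∈ Y, if actT t y a = actT t x a then (1:ℕ) else 0 :=
          fun x _ => Finset.sum_comm
        rw [Finset.sum_congr rfl h1]
        exact Finset.sum_comm
    _ = ∑ a ∈ St r n t, ∑ x ∈ Y, Ncnt Y t a (actT t x a) := by
        refine Finset.sum_congr rfl fun a _ => Finset.sum_congr rfl fun x _ => ?_
        rw [Ncnt_eq_sum]
    _ = ∑ a ∈ St r n t, ∑ b ∈ St r n t, (Ncnt Y t a b) ^ 2 := by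
        refine Finset.sum_congr rfl fun a ha => ?_
        rw [← Finset.sum_fiberwise_of_maps_to (g := fun x => actT t x a)
          (fun x _ => actT_mem_St x ha) (fun x => Ncnt Y t a (actT t x a))]
        refine Finset.sum_congr rfl fun b _ => ?_
        have : ∀ x ∈ Finset.filter (fun x => actT t x a = b) Y,
            Ncnt Y t a (actT t x a) = Ncnt Y t a b := by
          intro x hx
          rw [(Finset.mem_filter.mp hx).2]
        rw [Finset.sum_congr rfl this, Finset.sum_const, smul_eq_mul, sq]
        congr 1
        rw [Ncnt]
        congr
end Part4

section Part5
open Finset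
variable {r n : ℕ} [NeZero r]

local notation "Om" => (Multiplicative (ZMod r) × Fin n)
local notation "W" => Wr (Multiplicative (ZMod r)) n

lemma natcard_bridge (Y : Finset W) (t : ℕ) (a b : Fin t → Om) :
    Nat.card {y : W // y ∈ (↑Y : Set W) ∧ (fun s => wAct y (a s)) = b} = Ncnt Y t a b := by
  classical
  rw [Ncnt, ← Nat.card_eq_finsetCard]
  refine Nat.card_congr (Equiv.subtypeEquivRight fun y => ?_)
  rw [@Finset.mem_filter _ _ (Classical.decPred _)]
  exact and_congr Finset.mem_coe Iff.rfl

lemma design_iff (Y : Finset W) (t : ℕ) :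
    IsTDesign r n t ↑Y ↔
      ∃ c : ℕ, 0 < c ∧ ∀ a ∈ St r n t, ∀ b ∈ St r n t, Ncnt Y t a b = c := by
  unfold IsTDesign IsTransitiveOn
  refine exists_congr fun c => and_congr Iff.rfl ?_
  constructor
  · intro h a ha b hb
    rw [← natcard_bridge]
    exact h a (mem_St.mp ha) b (mem_St.mp hb)
  · intro h a ha b hb
    rw [natcard_bridge]
    exact h a (mem_St.mpr ha) b (mem_St.mpr hb)

lemma St_nonempty {t : ℕ} (htn : t ≤ n) : (St r n t).Nonempty := by
  refine ⟨fun s => (1, Fin.castLE htn s), mem_St.mpr ?_⟩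
  intro s s' h
  exact Fin.castLE_injective htn h

lemma design_sum (Y : Finset W) {t : ℕ} (htn : t ≤ n) (hd : IsTDesign r n t ↑Y) :
    ∑ a ∈ St r n t, ∑ b ∈ St r n t, (Ncnt Y t a b) ^ 2 = Y.card ^ 2 := by
  obtain ⟨c, -, hc⟩ := (design_iff Y t).mp hd
  obtain ⟨a0, ha0⟩ := St_nonempty (r := r) htn
  have hcard : (St r n t).card * c = Y.card := by
    rw [← sum_Ncnt Y ha0]
    rw [Finset.sum_congr rfl (fun b hb => hc a0 ha0 b hb), Finset.sum_const, smul_eq_mul]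
  calc ∑ a ∈ St r n t, ∑ b ∈ St r n t, (Ncnt Y t a b) ^ 2
      = ∑ a ∈ St r n t, ∑ b ∈ St r n t, c ^ 2 := by
        refine Finset.sum_congr rfl fun a ha => Finset.sum_congr rfl fun b hb => ?_
        rw [hc a ha b hb]
    _ = ((St r n t).card * c) ^ 2 := by
        rw [Finset.sum_const, Finset.sum_const, smul_eq_mul, smul_eq_mul]
        ring
    _ = Y.card ^ 2 := by rw [hcard]

lemma sum_design (Y : Finset W) {t : ℕ} (htn : t ≤ n) (hY : Y.Nonempty)
    (hsum : ∑ a ∈ St r n t, ∑ b ∈ St r n t, (Ncnt Y t a b) ^ 2 = Y.card ^ 2) :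
    IsTDesign r n t ↑Y := by
  classical
  have hm0 : 0 < (St r n t).card := Finset.card_pos.mpr (St_nonempty htn)
  -- all (m * N - |Y|)^2 sum to zero over ℤ
  have hNsum : ∀ a ∈ St r n t, ∑ b ∈ St r n t, (Ncnt Y t a b : ℤ) = (Y.card : ℤ) := by
    intro a ha
    rw [← Nat.cast_sum, sum_Ncnt Y ha]
  have hT : ∑ a ∈ St r n t, ∑ b ∈ St r n t,
      (((St r n t).card : ℤ) * Ncnt Y t a b - Y.card) ^ 2 = 0 := by
    have expand : ∀ a ∈ St r n t, ∑ b ∈ St r n t,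
        (((St r n t).card : ℤ) * Ncnt Y t a b - Y.card) ^ 2 =
        ((St r n t).card : ℤ)^2 * (∑ b ∈ St r n t, (Ncnt Y t a b : ℤ)^2)
          - 2 * (St r n t).card * Y.card * (∑ b ∈ St r n t, (Ncnt Y t a b : ℤ))
          + (St r n t).card * (Y.card : ℤ)^2 := by
      intro a ha
      rw [Finset.mul_sum, Finset.mul_sum, ← Finset.sum_sub_distrib]
      rw [show ((St r n t).card : ℤ) * (Y.card : ℤ)^2 = ∑ _b ∈ St r n t, (Y.card : ℤ)^2 by
        rw [Finset.sum_const, nsmul_eq_mul]]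
      rw [← Finset.sum_add_distrib]
      exact Finset.sum_congr rfl fun b _ => by ring
    rw [Finset.sum_congr rfl expand]
    rw [Finset.sum_add_distrib, Finset.sum_sub_distrib, ← Finset.mul_sum, ← Finset.mul_sum]
    have h1 : ∑ a ∈ St r n t, ∑ b ∈ St r n t, (Ncnt Y t a b : ℤ)^2 = (Y.card : ℤ)^2 := by
      have := congrArg (Nat.cast : ℕ → ℤ) hsum
      push_cast at this
      exact_mod_cast this
    have h2 : ∑ a ∈ St r n t, ∑ b ∈ St r n t, (Ncnt Y t a b : ℤ) = ((St r n t).card : ℤ) * Y.card := by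
      rw [Finset.sum_congr rfl hNsum, Finset.sum_const, nsmul_eq_mul]
    rw [h1, h2, Finset.sum_const, nsmul_eq_mul]
    ring
  have hkey : ∀ a ∈ St r n t, ∀ b ∈ St r n t, (St r n t).card * Ncnt Y t a b = Y.card := by
    have h0 := (Finset.sum_eq_zero_iff_of_nonneg (fun a _ =>
      Finset.sum_nonneg fun b _ => sq_nonneg _)).mp hT
    intro a ha b hb
    have h1 := (Finset.sum_eq_zero_iff_of_nonneg (fun b _ => sq_nonneg _)).mp (h0 a ha) b hb
    have h2 := sub_eq_zero.mp (sq_eq_zero_iff.mp h1)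
    exact_mod_cast h2
  obtain ⟨a0, ha0⟩ := St_nonempty (r := r) htn
  refine (design_iff Y t).mpr ⟨Ncnt Y t a0 a0, ?_, ?_⟩
  · rcases Nat.eq_zero_or_pos (Ncnt Y t a0 a0) with h | h
    · exfalso
      have h3 := hkey a0 ha0 a0 ha0
      rw [h, mul_zero] at h3
      have := Finset.card_pos.mpr hY
      omega
    · exact h
  · intro a ha b hb
    exact Nat.eq_of_mul_eq_mul_left hm0 ((hkey a ha b hb).trans (hkey a0 ha0 a0 ha0).symm)
end Part5

section Part6
open Finset
variable {r n : ℕ} [NeZero r]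

local notation "Om" => (Multiplicative (ZMod r) × Fin n)
local notation "W" => Wr (Multiplicative (ZMod r)) n

lemma snoc_inj {α : Type*} {t : ℕ} {f : Fin t → α} (hf : Function.Injective f) {x : α}
    (hx : ∀ s, f s ≠ x) : Function.Injective (Fin.snoc f x) := by
  intro s s' h
  rcases Fin.eq_castSucc_or_eq_last s with ⟨u, rfl⟩ | rfl <;>
    rcases Fin.eq_castSucc_or_eq_last s' with ⟨u', rfl⟩ | rfl
  · rw [Fin.snoc_castSucc, Fin.snoc_castSucc] at h
    exact congrArg Fin.castSucc (hf h)
  · rw [Fin.snoc_castSucc, Fin.snoc_last] at h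
    exact absurd h (hx u)
  · rw [Fin.snoc_castSucc, Fin.snoc_last] at h
    exact absurd h.symm (hx u')
  · rfl

lemma design_step (Y : Finset W) {t : ℕ} (htn : t + 1 ≤ n)
    (hd : IsTDesign r n (t + 1) ↑Y) : IsTDesign r n t ↑Y := by
  classical
  obtain ⟨c, hc0, hc⟩ := (design_iff Y (t + 1)).mp hd
  refine (design_iff Y t).mpr ⟨c * (r * (n - t)), ?_, ?_⟩
  · have : 0 < r := Nat.pos_of_ne_zero (NeZero.ne r)
    have : 0 < n - t := by omega
    positivity
  intro a ha b hb
  -- choose a position outside the image of a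
  have hacard : (univ.image fun s => (a s).2).card = t := by
    rw [Finset.card_image_of_injective _ (mem_St.mp ha), Finset.card_univ, Fintype.card_fin]
  have hcompl : ((univ.image fun s => (a s).2)ᶜ : Finset (Fin n)).Nonempty := by
    rw [← Finset.card_pos, Finset.card_compl, hacard, Fintype.card_fin]
    omega
  obtain ⟨i0, hi0⟩ := hcompl
  rw [Finset.mem_compl] at hi0
  set x0 : Om := (1, i0) with hx0
  set abar : Fin (t + 1) → Om := Fin.snoc a x0 with habar
  have habar_mem : abar ∈ St r n (t + 1) := by
    rw [mem_St]
    have : (fun s => (abar s).2) = Fin.snoc (fun s => (a s).2) i0 := by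
      rw [habar, show (fun s => ((Fin.snoc a x0 : Fin (t+1) → Om) s).2) =
        (Prod.snd ∘ Fin.snoc a x0) from rfl, Fin.comp_snoc]
      rfl
    rw [this]
    refine snoc_inj (mem_St.mp ha) fun s hs => ?_
    exact hi0 (hs ▸ Finset.mem_image_of_mem _ (Finset.mem_univ s))
  -- the fibers
  have key : Ncnt Y t a b =
      ∑ ω ∈ univ.filter (fun ω : Om => ω.2 ∉ univ.image fun s => (b s).2),
        Ncnt Y (t + 1) abar (Fin.snoc b ω) := by
    rw [Ncnt, Finset.filter_congr_decidable]
    rw [Finset.card_eq_sum_card_fiberwise (f := fun y => wAct y x0)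
      (t := univ.filter (fun ω : Om => ω.2 ∉ univ.image fun s => (b s).2)) ?_]
    · refine Finset.sum_congr rfl fun ω _ => ?_
      rw [Ncnt, Finset.filter_congr_decidable, Finset.filter_filter]
      congr 1
      ext y
      simp only [Finset.mem_filter]
      refine and_congr_right fun _ => ?_
      constructor
      · rintro ⟨h1, h2⟩
        rw [show actT (t+1) y abar = (wAct y) ∘ (Fin.snoc a x0) from rfl, Fin.comp_snoc, h2]
        congr 1
      · intro h
        have h1 : actT t y a = b := by
          funext s
          have := congrFun h s.castSucc
          rw [show actT (t+1) y abar = (wAct y) ∘ (Fin.snoc a x0) from rfl, Fin.comp_snoc] at this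
          rwa [Fin.snoc_castSucc, Fin.snoc_castSucc] at this
        refine ⟨h1, ?_⟩
        have := congrFun h (Fin.last t)
        rw [show actT (t+1) y abar = (wAct y) ∘ (Fin.snoc a x0) from rfl, Fin.comp_snoc] at this
        rwa [Fin.snoc_last, Fin.snoc_last] at this
    · intro y hy
      rw [Finset.mem_coe, Finset.mem_filter] at hy ⊢
      refine ⟨Finset.mem_univ _, ?_⟩
      intro hmem
      rw [Finset.mem_image] at hmem
      obtain ⟨s, -, hs⟩ := hmem
      have hb2 : (b s).2 = y.right (a s).2 := by rw [← hy.2]; rfl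
      rw [hb2] at hs
      have : (a s).2 = i0 := y.right.injective hs
      exact hi0 (this ▸ Finset.mem_image_of_mem _ (Finset.mem_univ s))
  -- each fiber has the design value c
  have hconst : ∀ ω ∈ univ.filter (fun ω : Om => ω.2 ∉ univ.image fun s => (b s).2),
      Ncnt Y (t + 1) abar (Fin.snoc b ω) = c := by
    intro ω hω
    rw [Finset.mem_filter] at hω
    refine hc abar habar_mem (Fin.snoc b ω) ?_
    rw [mem_St]
    have : (fun s => ((Fin.snoc b ω : Fin (t+1) → Om) s).2) = Fin.snoc (fun s => (b s).2) ω.2 := by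
      rw [show (fun s => ((Fin.snoc b ω : Fin (t+1) → Om) s).2) =
        (Prod.snd ∘ Fin.snoc b ω) from rfl, Fin.comp_snoc]
      rfl
    rw [this]
    refine snoc_inj (mem_St.mp hb) fun s hs => ?_
    exact hω.2 (hs ▸ Finset.mem_image_of_mem _ (Finset.mem_univ s))
  -- the number of extensions
  have hcount : (univ.filter (fun ω : Om => ω.2 ∉ univ.image fun s => (b s).2)).card
      = r * (n - t) := by
    have heq : (univ.filter (fun ω : Om => ω.2 ∉ univ.image fun s => (b s).2)) =
        (univ : Finset (Multiplicative (ZMod r))) ×ˢ ((univ.image fun s => (b s).2)ᶜ) := by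
      ext ω
      simp [Finset.mem_product, Finset.mem_compl]
    rw [heq, Finset.card_product, Finset.card_univ, Fintype.card_multiplicative, ZMod.card,
      Finset.card_compl, Fintype.card_fin,
      Finset.card_image_of_injective _ (mem_St.mp hb), Finset.card_univ, Fintype.card_fin]
  rw [key, Finset.sum_congr rfl hconst, Finset.sum_const, smul_eq_mul, hcount, mul_comm]

lemma design_mono (Y : Finset W) : ∀ {t s : ℕ}, s ≤ t → t ≤ n →
    IsTDesign r n t ↑Y → IsTDesign r n s ↑Y := by
  intro t
  induction t with
  | zero => intro s hs _ hd; rw [Nat.le_zero.mp hs]; exact hd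
  | succ t ih =>
    intro s hs htn hd
    rcases Nat.lt_or_ge s (t + 1) with h | h
    · exact ih (Nat.lt_succ_iff.mp h) (by omega) (design_step Y htn hd)
    · rw [Nat.le_antisymm hs h]; exact hd
end Part6

section Part7
open Finset

lemma charlier_zero (a : ℝ) (x : ℝ) : charlier a 0 x = 1 := by
  simp [charlier]

lemma alt_sum_R (m : ℕ) :
    ∑ i ∈ range (m + 1), (-1 : ℝ) ^ i * (m.choose i : ℝ) = if m = 0 then 1 else 0 := by
  have h := @Int.alternating_sum_range_choose m
  have h2 := congrArg (Int.cast : ℤ → ℝ) h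
  push_cast at h2
  exact h2

lemma charlier_inversion (r t : ℕ) (x : ℝ) :
    ∑ k ∈ range (t + 1), (t.choose k : ℝ) * charlier (1 / r) k x
      = (r : ℝ) ^ t * ∏ m ∈ range t, (x - m) := by
  have hinv : ((1 / (r : ℝ))⁻¹) = (r : ℝ) := by rw [one_div, inv_inv]
  calc ∑ k ∈ range (t + 1), (t.choose k : ℝ) * charlier (1 / r) k x
      = ∑ k ∈ range (t + 1), ∑ j ∈ range (t + 1), (if j ≤ k then
          (-1 : ℝ) ^ (k - j) * (t.choose k : ℝ) * (k.choose j : ℝ) * (r : ℝ) ^ j *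
            ∏ m ∈ range j, (x - m) else 0) := by
        refine Finset.sum_congr rfl fun k hk => ?_
        rw [Finset.mem_range] at hk
        rw [charlier, Finset.mul_sum]
        rw [← Finset.sum_subset (Finset.range_subset_range.mpr (show k + 1 ≤ t + 1 by omega))
          (fun j _ hj => by rw [if_neg (by rw [Finset.mem_range] at hj; omega)])]
        refine Finset.sum_congr rfl fun j hj => ?_
        rw [Finset.mem_range] at hj
        rw [if_pos (by omega), hinv]
        ring
    _ = ∑ j ∈ range (t + 1), ((r : ℝ) ^ j * ∏ m ∈ range j, (x - m)) *
          ∑ k ∈ range (t + 1), (if j ≤ k then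
            (-1 : ℝ) ^ (k - j) * (t.choose k : ℝ) * (k.choose j : ℝ) else 0) := by
        rw [Finset.sum_comm]
        refine Finset.sum_congr rfl fun j _ => ?_
        rw [Finset.mul_sum]
        refine Finset.sum_congr rfl fun k _ => ?_
        split_ifs with h
        · ring
        · rw [mul_zero]
    _ = (r : ℝ) ^ t * ∏ m ∈ range t, (x - m) := by
        have hA : ∀ j ∈ range (t + 1), (∑ k ∈ range (t + 1), (if j ≤ k then
            (-1 : ℝ) ^ (k - j) * (t.choose k : ℝ) * (k.choose j : ℝ) else 0)) =
            if j = t then 1 else 0 := by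
          intro j hj
          rw [Finset.mem_range] at hj
          have hj' : j ≤ t := by omega
          rw [Finset.sum_ite, Finset.sum_const_zero, add_zero]
          have hfil : Finset.filter (fun k => j ≤ k) (range (t + 1)) = Finset.Ico j (t + 1) := by
            ext k
            simp only [Finset.mem_filter, Finset.mem_range, Finset.mem_Ico]
            omega
          rw [hfil, Finset.sum_Ico_eq_sum_range, show t + 1 - j = (t - j) + 1 by omega]
          have hterm : ∀ i ∈ range (t - j + 1),
              (-1 : ℝ) ^ (j + i - j) * (t.choose (j + i) : ℝ) * ((j + i).choose j : ℝ) =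
              (t.choose j : ℝ) * ((-1 : ℝ) ^ i * ((t - j).choose i : ℝ)) := by
            intro i hi
            rw [Finset.mem_range] at hi
            have h1 : j + i - j = i := by omega
            have h2 : t.choose (j + i) * (j + i).choose j = t.choose j * (t - j).choose i := by
              have h3 := Nat.choose_mul (n := t) (show j ≤ j + i by omega)
              rwa [Nat.add_sub_cancel_left] at h3
            rw [h1, mul_assoc, ← Nat.cast_mul, h2, Nat.cast_mul]
            ring
          rw [Finset.sum_congr rfl hterm, ← Finset.mul_sum, alt_sum_R]
          by_cases hjt : j = t
          · subst hjt
            rw [if_pos rfl, if_pos (Nat.sub_self j), Nat.choose_self]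
            norm_num
          · rw [if_neg (by omega), if_neg hjt, mul_zero]
        rw [Finset.sum_congr rfl fun j hj => by rw [hA j hj]]
        have : ∀ j ∈ range (t + 1), ((r : ℝ) ^ j * ∏ m ∈ range j, (x - m)) *
            (if j = t then (1:ℝ) else 0) =
            if j = t then ((r : ℝ) ^ j * ∏ m ∈ range j, (x - m)) else 0 := by
          intro j _
          split_ifs
          · rw [mul_one]
          · rw [mul_zero]
        rw [Finset.sum_congr rfl this, Finset.sum_ite_eq' (range (t + 1)) t,
          if_pos (Finset.self_mem_range_succ t)]

lemma prod_range_cast_sub (θ k : ℕ) :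
    ∏ m ∈ Finset.range k, ((θ : ℝ) - m) = (θ.descFactorial k : ℝ) := by
  rw [← descPochhammer_eval_eq_descFactorial ℝ θ k]
  induction k with
  | zero => simp [descPochhammer_zero]
  | succ k ih =>
    rw [Finset.prod_range_succ, ih, descPochhammer_succ_right, Polynomial.eval_mul,
      Polynomial.eval_sub, Polynomial.eval_X, Polynomial.eval_natCast]
end Part7

/-- **`t`-designs and the dual distance distribution.**
Let `r, n ≥ 1`, let `Y` be a nonempty subset of `C_r ≀ Sₙ` with dual distance
distribution `A'_k = (1/|Y|) ∑_{x,y ∈ Y} C_k^{(1/r)}(θ(x⁻¹y))`, and let `1 ≤ t ≤ n`.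
If `Y` is a `t`-design then `A'_k = 0` for `1 ≤ k ≤ t`; and conversely, if `t ≤ n/2`
and `A'_k = 0` for all `1 ≤ k ≤ t`, then `Y` is a `t`-design. -/
theorem t_design_dual_distance (r n : ℕ) (hr : 1 ≤ r) (hn : 1 ≤ n)
    (Y : Finset (Wr (Multiplicative (ZMod r)) n)) (hY : Y.Nonempty)
    (A' : ℕ → ℝ)
    (hA' : ∀ k, A' k =
      (1 / (Y.card : ℝ)) * ∑ x ∈ Y, ∑ y ∈ Y, charlier (1 / r) k (theta (x⁻¹ * y)))
    (t : ℕ) (ht1 : 1 ≤ t) (htn : t ≤ n) :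
    (IsTDesign r n t ↑Y → ∀ k, 1 ≤ k → k ≤ t → A' k = 0) ∧
    (2 * t ≤ n → (∀ k, 1 ≤ k → k ≤ t → A' k = 0) → IsTDesign r n t ↑Y) := by
  haveI : NeZero r := ⟨by omega⟩
  have hYc : 0 < Y.card := Finset.card_pos.mpr hY
  have hYcR : (Y.card : ℝ) ≠ 0 := Nat.cast_ne_zero.mpr (by omega)
  have hA0 : A' 0 = Y.card := by
    rw [hA' 0]
    have h1 : ∀ x ∈ Y, (∑ y ∈ Y, charlier (1 / r) 0 (theta (x⁻¹ * y))) = (Y.card : ℝ) := by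
      intro x _
      rw [Finset.sum_congr rfl fun y _ => charlier_zero _ _, Finset.sum_const, nsmul_eq_mul,
        mul_one]
    rw [Finset.sum_congr rfl h1, Finset.sum_const, nsmul_eq_mul]
    field_simp
  have hsum_eq : ∀ k, (∑ x ∈ Y, ∑ y ∈ Y, charlier (1 / r) k (theta (x⁻¹ * y)))
      = (Y.card : ℝ) * A' k := by
    intro k
    rw [hA' k]
    field_simp
  have hbridge : ∀ s : ℕ, ((∑ x ∈ Y, ∑ y ∈ Y, FixCnt r n s (x⁻¹ * y) : ℕ) : ℝ)
      = ∑ k ∈ Finset.range (s + 1), (s.choose k : ℝ) * ((Y.card : ℝ) * A' k) := by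
    intro s
    push_cast
    calc ∑ x ∈ Y, ∑ y ∈ Y, (FixCnt r n s (x⁻¹ * y) : ℝ)
        = ∑ x ∈ Y, ∑ y ∈ Y, ∑ k ∈ Finset.range (s + 1),
            (s.choose k : ℝ) * charlier (1 / r) k (theta (x⁻¹ * y)) := by
          refine Finset.sum_congr rfl fun x _ => Finset.sum_congr rfl fun y _ => ?_
          rw [fixcnt_eq, charlier_inversion r s]
          push_cast
          rw [prod_range_cast_sub]
      _ = ∑ k ∈ Finset.range (s + 1), ∑ x ∈ Y, ∑ y ∈ Y,
            (s.choose k : ℝ) * charlier (1 / r) k (theta (x⁻¹ * y)) := by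
          have h1 : ∀ x ∈ Y, (∑ y ∈ Y, ∑ k ∈ Finset.range (s + 1),
              (s.choose k : ℝ) * charlier (1 / r) k (theta (x⁻¹ * y))) =
              ∑ k ∈ Finset.range (s + 1), ∑ y ∈ Y,
                (s.choose k : ℝ) * charlier (1 / r) k (theta (x⁻¹ * y)) :=
            fun x _ => Finset.sum_comm
          rw [Finset.sum_congr rfl h1]
          exact Finset.sum_comm
      _ = ∑ k ∈ Finset.range (s + 1), (s.choose k : ℝ) * ((Y.card : ℝ) * A' k) := by
          refine Finset.sum_congr rfl fun k _ => ?_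
          rw [← hsum_eq k, Finset.mul_sum]
          refine Finset.sum_congr rfl fun x _ => ?_
          rw [Finset.mul_sum]
  constructor
  · intro hd
    intro k
    induction k using Nat.strong_induction_on with
    | _ s ih =>
      intro hs1 hst
      have hdesign_s : IsTDesign r n s ↑Y := design_mono Y hst htn hd
      have hfixN : (∑ x ∈ Y, ∑ y ∈ Y, FixCnt r n s (x⁻¹ * y)) = Y.card ^ 2 :=
        (sumFix_eq Y s).trans (design_sum Y (le_trans hst htn) hdesign_s)
      have hR := hbridge s
      rw [hfixN] at hR
      push_cast at hR
      rw [Finset.sum_range_succ] at hR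
      have hsmall : ∀ k ∈ Finset.range s, (s.choose k : ℝ) * ((Y.card : ℝ) * A' k) =
          if k = 0 then ((Y.card : ℝ)) ^ 2 else 0 := by
        intro k hk
        rw [Finset.mem_range] at hk
        by_cases h : k = 0
        · subst h
          rw [if_pos rfl, Nat.choose_zero_right, hA0]
          push_cast
          ring
        · rw [if_neg h, ih k hk (by omega) (by omega), mul_zero, mul_zero]
      rw [Finset.sum_congr rfl hsmall, Finset.sum_ite_eq' (Finset.range s) 0,
        if_pos (Finset.mem_range.mpr (by omega)), Nat.choose_self] at hR
      have h2 : (Y.card : ℝ) * A' s = 0 := by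
        push_cast at hR
        linarith
      rcases mul_eq_zero.mp h2 with h | h
      · exact absurd h hYcR
      · exact h
  · intro _ hzero
    have hFt : ((∑ x ∈ Y, ∑ y ∈ Y, FixCnt r n t (x⁻¹ * y) : ℕ) : ℝ) = ((Y.card ^ 2 : ℕ) : ℝ) := by
      rw [hbridge t]
      have hterms : ∀ k ∈ Finset.range (t + 1), (t.choose k : ℝ) * ((Y.card : ℝ) * A' k) =
          if k = 0 then ((Y.card : ℝ)) ^ 2 else 0 := by
        intro k hk
        rw [Finset.mem_range] at hk
        by_cases h : k = 0
        · subst h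
          rw [if_pos rfl, Nat.choose_zero_right, hA0]
          push_cast
          ring
        · rw [if_neg h, hzero k (by omega) (by omega), mul_zero, mul_zero]
      rw [Finset.sum_congr rfl hterms, Finset.sum_ite_eq' (Finset.range (t + 1)) 0,
        if_pos (Finset.mem_range.mpr (by omega))]
      push_cast
      ring
    have hfixN : (∑ x ∈ Y, ∑ y ∈ Y, FixCnt r n t (x⁻¹ * y)) = Y.card ^ 2 :=
      Nat.cast_injective hFt
    exact sum_design Y htn hY ((sumFix_eq Y t).symm.trans hfixN)
end
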